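/- arXiv:1603.05004 — 3 statements merged into one kernel-verified Lean document; each statement's English description precedes it below -/
import Mathlib

section
/- Under hypotheses H1–H3, for every x ∈ ℝ^n_+ with ‖x^i‖ > 0, the long-term growth rate of species i satisfies r_i(x) ≤ 0. -/
open MeasureTheory Filter Topology

noncomputable section

namespace RP

/-- The state space: species `i` has `n i` individual states;
points are tuples of row vectors. -/
abbrev St (m : ℕ) (n : Fin m → ℕ) := ∀ i : Fin m, Fin (n i) → ℝ

/-- A block-diagonal collection of matrices, one block per species. -/
abbrev Blocks (m : ℕ) (n : Fin m → ℕ) := ∀ i : Fin m, Matrix (Fin (n i)) (Fin (n i)) ℝ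

variable {m : ℕ} {n : Fin m → ℕ}

/-- The nonnegative cone `ℝ^n_+`. -/
def cone (m : ℕ) (n : Fin m → ℕ) : Set (St m n) := {x | ∀ i j, 0 ≤ x i j}

/-- The ℓ¹-norm `‖x^i‖` of the subvector of species `i`. -/
def snorm (x : St m n) (i : Fin m) : ℝ := ∑ j, |x i j|

/-- The extinction set `S₀ = {x ∈ ℝ^n_+ : ∏ᵢ ‖x^i‖ = 0}`. -/
def extinct (m : ℕ) (n : Fin m → ℕ) : Set (St m n) :=
  {x ∈ cone m n | ∏ i, snorm x i = 0}

/-- The update map `Φ_A (x) = x A(x)` (blockwise, row vectors on the left). -/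
def Phi (A : St m n → Blocks m n) (x : St m n) : St m n :=
  fun i => Matrix.vecMul (x i) (A x i)

/-- An explicit norm on matrices (sum of absolute values of the entries). -/
def mnorm {a b : Type*} [Fintype a] [Fintype b] (M : Matrix a b ℝ) : ℝ :=
  ∑ j, ∑ k, |M j k|

/-- The matrix cocycle `A_i(X_0) A_i(X_1) ⋯ A_i(X_{t-1})` along the orbit of `x`. -/
def coc (A : St m n → Blocks m n) (i : Fin m) (x : St m n) :
    ℕ → Matrix (Fin (n i)) (Fin (n i)) ℝ
  | 0 => 1
  | t + 1 => coc A i x t * A ((Phi A)^[t] x) i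

/-- The long-term growth rate `r_i(x)` of species `i` starting from `x`. -/
def rate (A : St m n → Blocks m n) (i : Fin m) (x : St m n) : ℝ :=
  Filter.limsup (fun t : ℕ => Real.log (mnorm (coc A i x t)) / t) Filter.atTop

/-- The long-term growth rate `r_i(μ) = ∫ r_i dμ`. -/
def rateMu (A : St m n → Blocks m n) (i : Fin m) (μ : Measure (St m n)) : ℝ :=
  ∫ x, rate A i x ∂μ

/-- A nonnegative primitive matrix. -/
def IsPrimitive {d : ℕ} (P : Matrix (Fin d) (Fin d) ℝ) : Prop :=
  (∀ j k, 0 ≤ P j k) ∧ ∃ t : ℕ, 0 < t ∧ ∀ j k, 0 < (P ^ t) j k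

/-- Hypotheses H1–H3 of the model. -/
structure Hyp (A : St m n → Blocks m n) (SA : Set (St m n)) : Prop where
  H1cont : Continuous A
  H1nonneg : ∀ x i j k, 0 ≤ A x i j k
  H2 : ∀ i, ∃ P : Matrix (Fin (n i)) (Fin (n i)) ℝ, IsPrimitive P ∧
    ∀ x ∈ cone m n, ∀ j k, (A x i j k = 0 ↔ P j k = 0)
  H3compact : IsCompact SA
  H3sub : SA ⊆ cone m n
  H3absorb : ∀ x ∈ cone m n, ∃ T : ℕ, ∀ t ≥ T, (Phi A)^[t] x ∈ SA

/-- The ω-limit set of `x` under iteration of `f`. -/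
def omegaSet {X : Type*} [TopologicalSpace X] (f : X → X) (x : X) : Set X :=
  {y | ∃ tk : ℕ → ℕ, StrictMono tk ∧ Tendsto (fun s => f^[tk s] x) atTop (𝓝 y)}

/-- `M` is an isolated invariant set for `f` restricted to `Y`: it has a compact
neighborhood `N` in `Y` whose largest invariant subset is contained in `M`. -/
def IsolatedIn {X : Type*} [TopologicalSpace X] (f : X → X) (M Y : Set X) : Prop :=
  ∃ N : Set X, IsCompact N ∧ N ⊆ Y ∧ M ⊆ N ∧ (∀ x ∈ M, N ∈ 𝓝[Y] x) ∧
    ∀ K ⊆ N, f '' K = K → K ⊆ M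

/-- `M ⊆ S₀` is unsaturated: isolated in all of `ℝ^n_+` and its stable set
lies in `S₀`. -/
def Unsaturated (A : St m n → Blocks m n) (M : Set (St m n)) : Prop :=
  IsolatedIn (Phi A) M (cone m n) ∧
    ∀ x ∈ cone m n, omegaSet (Phi A) x ⊆ M → x ∈ extinct m n

/-- The δ-neighborhood of a set within the cone. -/
def nbhd (S : Set (St m n)) (δ : ℝ) : Set (St m n) :=
  {x ∈ cone m n | ∃ y ∈ S, dist x y < δ}

/-- A δ-perturbation of the model `(A, S_A)`. -/
structure Pert (A : St m n → Blocks m n) (SA : Set (St m n)) (δ : ℝ)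
    (B : St m n → Blocks m n) (SB : Set (St m n)) : Prop where
  hyp : Hyp B SB
  sub : SB ⊆ nbhd SA δ
  close : ∀ x ∈ nbhd SA 1, ∀ i j k, |A x i j k - B x i j k| ≤ δ

/-- Permanence with repulsion constant `η`. -/
def PermanentWith (f : St m n → St m n) (η : ℝ) : Prop :=
  ∀ x ∈ cone m n, (∀ i, 0 < snorm x i) →
    ∃ T : ℕ, ∀ t ≥ T, ∀ i, η < snorm (f^[t] x) i

/-- Permanence. -/
def Permanent (f : St m n → St m n) : Prop := ∃ η > 0, PermanentWith f η

/-- Robust permanence: all sufficiently small perturbations are permanent with a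
common constant. -/
def RobustlyPermanent (A : St m n → Blocks m n) (SA : Set (St m n)) : Prop :=
  ∃ δ > 0, ∃ η > 0, ∀ B SB, Pert A SA δ B SB → PermanentWith (Phi B) η

/-- The global attractor `G_A`. -/
def GA (A : St m n → Blocks m n) (SA : Set (St m n)) : Set (St m n) :=
  ⋂ s : ℕ, closure (⋃ t ∈ Set.Ici s, (Phi A)^[t] '' SA)

/-- A backward orbit through `x` lying in `M`. -/
def BackOrbit {X : Type*} (f : X → X) (M : Set X) (x : X) (σ : ℕ → X) : Prop :=
  σ 0 = x ∧ (∀ s, f (σ (s + 1)) = σ s) ∧ ∀ s, σ s ∈ M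

/-- The α-limit set of a backward orbit. -/
def alphaSet {X : Type*} [TopologicalSpace X] (σ : ℕ → X) : Set X :=
  {y | ∃ sk : ℕ → ℕ, StrictMono sk ∧ Tendsto (fun s => σ (sk s)) atTop (𝓝 y)}

/-- A Morse decomposition `{M_1, …, M_k}` of a compact invariant set `M` for `f`. -/
def MorseDecomp {X : Type*} [TopologicalSpace X] (f : X → X) (M : Set X)
    {k : ℕ} (Ms : Fin k → Set X) : Prop :=
  (∀ a b, a ≠ b → Disjoint (Ms a) (Ms b)) ∧
  (∀ a, Ms a ⊆ M ∧ IsCompact (Ms a) ∧ f '' Ms a = Ms a ∧ IsolatedIn f (Ms a) M) ∧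
  (∀ x ∈ M \ ⋃ a, Ms a, ∃ a, omegaSet f x ⊆ Ms a ∧
    ∀ σ : ℕ → X, BackOrbit f M x σ → ∃ b, a < b ∧ alphaSet σ ⊆ Ms b)

/-- `μ` is a weak* limit point of the sequence of measures `Lam`. -/
def WeakLimitPt {X : Type*} [TopologicalSpace X] [MeasurableSpace X]
    (Lam : ℕ → Measure X) (μ : Measure X) : Prop :=
  ∃ tk : ℕ → ℕ, StrictMono tk ∧
    ∀ g : BoundedContinuousFunction X ℝ,
      Tendsto (fun s => ∫ y, g y ∂(Lam (tk s))) atTop (𝓝 (∫ y, g y ∂μ))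

/-- The empirical occupation measures `Lam_t(x) = (1/t) ∑_{s<t} δ_{f^s(x)}`. -/
def emp {X : Type*} [MeasurableSpace X] (f : X → X) (x : X) (t : ℕ) : Measure X :=
  (t : ENNReal)⁻¹ • ∑ s ∈ Finset.range t, Measure.dirac (f^[s] x)

/-- An invariant Borel probability measure for `f`. -/
def InvProb {X : Type*} [MeasurableSpace X] (f : X → X) (μ : Measure X) : Prop :=
  IsProbabilityMeasure μ ∧ μ.map f = μ

end RP


namespace RP

variable {m : ℕ} {n : Fin m → ℕ}

lemma mnorm_nonneg {a b : Type*} [Fintype a] [Fintype b] (M : Matrix a b ℝ) : 0 ≤ mnorm M :=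
  Finset.sum_nonneg fun _ _ => Finset.sum_nonneg fun _ _ => abs_nonneg _

lemma row_abs_sum_le_mnorm {a b : Type*} [Fintype a] [Fintype b] (M : Matrix a b ℝ) (j : a) :
    ∑ k, |M j k| ≤ mnorm M := by
  refine Finset.single_le_sum (f := fun j => ∑ k, |M j k|) (fun _ _ => Finset.sum_nonneg fun _ _ => abs_nonneg _) (Finset.mem_univ j)

lemma mnorm_mul_le {a : Type*} [Fintype a] (M N : Matrix a a ℝ) :
    mnorm (M * N) ≤ mnorm M * mnorm N := by
  unfold mnorm
  calc ∑ j, ∑ k, |(M * N) j k| ≤ ∑ j, ∑ k, ∑ l, |M j l| * |N l k| := by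
        refine Finset.sum_le_sum fun j _ => Finset.sum_le_sum fun k _ => ?_
        rw [Matrix.mul_apply]
        refine (Finset.abs_sum_le_sum_abs _ _).trans ?_
        refine Finset.sum_le_sum fun l _ => ?_
        rw [abs_mul]
    _ = ∑ j, ∑ l, |M j l| * (∑ k, |N l k|) := by
        refine Finset.sum_congr rfl fun j _ => ?_
        rw [Finset.sum_comm]
        simp [Finset.mul_sum]
    _ ≤ ∑ j, ∑ l, |M j l| * (∑ k', ∑ k, |N k' k|) := by
        refine Finset.sum_le_sum fun j _ => Finset.sum_le_sum fun l _ => ?_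
        exact mul_le_mul_of_nonneg_left (row_abs_sum_le_mnorm N l) (abs_nonneg _)
    _ = (∑ j, ∑ l, |M j l|) * (∑ k', ∑ k, |N k' k|) := by
        rw [Finset.sum_mul]
        exact Finset.sum_congr rfl fun j _ => (Finset.sum_mul _ _ _).symm

lemma phi_mem_cone (A : St m n → Blocks m n) (hAn : ∀ x i j k, 0 ≤ A x i j k)
    {x : St m n} (hx : x ∈ cone m n) : Phi A x ∈ cone m n := by
  intro i j
  unfold Phi Matrix.vecMul
  exact Finset.sum_nonneg fun k _ => mul_nonneg (hx i k) (hAn x i k j)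

lemma iterate_mem_cone (A : St m n → Blocks m n) (hAn : ∀ x i j k, 0 ≤ A x i j k)
    {x : St m n} (hx : x ∈ cone m n) (t : ℕ) : (Phi A)^[t] x ∈ cone m n := by
  induction t with
  | zero => exact hx
  | succ t ih => rw [Function.iterate_succ_apply']; exact phi_mem_cone A hAn ih

lemma coc_nonneg (A : St m n → Blocks m n) (hAn : ∀ x i j k, 0 ≤ A x i j k)
    (i : Fin m) (x : St m n) (t : ℕ) (j k : Fin (n i)) : 0 ≤ coc A i x t j k := by
  induction t generalizing j k with
  | zero => simp [coc, Matrix.one_apply]; positivity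
  | succ t ih =>
      rw [coc, Matrix.mul_apply]
      exact Finset.sum_nonneg fun l _ => mul_nonneg (ih j l) (hAn _ i l k)

lemma iterate_apply_eq_vecMul (A : St m n → Blocks m n) (i : Fin m) (x : St m n) (t : ℕ) :
    ((Phi A)^[t] x) i = Matrix.vecMul (x i) (coc A i x t) := by
  induction t with
  | zero => simp [coc]
  | succ t ih =>
      rw [Function.iterate_succ_apply', coc, ← Matrix.vecMul_vecMul, ← ih]
      rfl

lemma coc_add (A : St m n → Blocks m n) (i : Fin m) (x : St m n) (t₀ s : ℕ) :
    coc A i x (t₀ + s) = coc A i x t₀ * coc A i ((Phi A)^[t₀] x) s := by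
  induction s with
  | zero => simp [coc]
  | succ s ih =>
      have : t₀ + (s + 1) = (t₀ + s) + 1 := by omega
      rw [this, coc, ih, coc, Matrix.mul_assoc, add_comm t₀ s, Function.iterate_add_apply]

lemma pow_entry_nonneg {d : ℕ} {P : Matrix (Fin d) (Fin d) ℝ} (hP : ∀ j k, 0 ≤ P j k)
    (t : ℕ) (j k : Fin d) : 0 ≤ (P ^ t) j k := by
  induction t generalizing j k with
  | zero => simp [Matrix.one_apply]; positivity
  | succ t ih =>
      rw [pow_succ, Matrix.mul_apply]
      exact Finset.sum_nonneg fun l _ => mul_nonneg (ih j l) (hP l k)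

lemma coc_pos (A : St m n → Blocks m n) (hAn : ∀ x i j k, 0 ≤ A x i j k)
    (i : Fin m) {P : Matrix (Fin (n i)) (Fin (n i)) ℝ} (hPn : ∀ j k, 0 ≤ P j k)
    (hpat : ∀ x ∈ cone m n, ∀ j k, (A x i j k = 0 ↔ P j k = 0))
    {x : St m n} (hx : x ∈ cone m n) (t : ℕ) (j k : Fin (n i))
    (hpos : 0 < (P ^ t) j k) : 0 < coc A i x t j k := by
  induction t generalizing j k with
  | zero =>
      simp only [pow_zero, Matrix.one_apply] at hpos ⊢
      rcases eq_or_ne j k with h | h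
      · simp [h, coc, Matrix.one_apply]
      · simp [h] at hpos
  | succ t ih =>
      rw [pow_succ, Matrix.mul_apply] at hpos
      obtain ⟨l, hl⟩ : ∃ l, 0 < (P ^ t) j l * P l k := by
        by_contra hcon
        push_neg at hcon
        have : ∑ l, (P ^ t) j l * P l k ≤ 0 :=
          Finset.sum_nonpos fun l _ => hcon l
        linarith
      have h1 : 0 < (P ^ t) j l := by
        rcases lt_or_ge 0 ((P ^ t) j l) with h | h
        · exact h
        · nlinarith [pow_entry_nonneg hPn t j l, hPn l k]
      have h2 : 0 < P l k := by
        nlinarith [pow_entry_nonneg hPn t j l, hPn l k]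
      have hXc : (Phi A)^[t] x ∈ cone m n := iterate_mem_cone A hAn hx t
      have hA2 : 0 < A ((Phi A)^[t] x) i l k := by
        rcases (hAn _ i l k).lt_or_eq with h | h
        · exact h
        · exact absurd (((hpat _ hXc l k).mp h.symm)) h2.ne'
      rw [coc, Matrix.mul_apply]
      have hterm : 0 < coc A i x t j l * A ((Phi A)^[t] x) i l k :=
        mul_pos (ih j l h1) hA2
      have : coc A i x t j l * A ((Phi A)^[t] x) i l k ≤
          ∑ l', coc A i x t j l' * A ((Phi A)^[t] x) i l' k :=
        Finset.single_le_sum (fun l' _ => mul_nonneg (coc_nonneg A hAn i x t j l') (hAn _ i l' k))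
          (Finset.mem_univ l)
      linarith

end RP

namespace RP

/-- whenever species `i` is present (`‖x^i‖ > 0`), its long-term
growth rate is nonpositive. -/
theorem rate_nonpos_of_present {m : ℕ} {n : Fin m → ℕ}
    (A : St m n → Blocks m n) (SA : Set (St m n)) (hA : Hyp A SA)
    (x : St m n) (hx : x ∈ cone m n) (i : Fin m) (hi : 0 < snorm x i) :
    rate A i x ≤ 0 := by
  obtain ⟨P, ⟨hPn, t₀, ht₀pos, hPpos⟩, hpat⟩ := hA.H2 i
  have hAn := hA.H1nonneg
  -- the cocycle at time t₀ is entrywise positive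
  set C0 := coc A i x t₀ with hC0def
  have hC0 : ∀ j k, 0 < C0 j k := fun j k =>
    coc_pos A hAn i hPn hpat hx t₀ j k (hPpos j k)
  -- a strictly positive coordinate of x i
  obtain ⟨k₀, hk₀⟩ : ∃ k₀, 0 < x i k₀ := by
    by_contra hcon
    push_neg at hcon
    have : snorm x i = 0 := by
      unfold snorm
      refine Finset.sum_eq_zero fun k _ => ?_
      have := le_antisymm (hcon k) (hx i k)
      simp [this]
    linarith
  -- v = X_{t₀}^i is strictly positive
  set v : Fin (n i) → ℝ := ((Phi A)^[t₀] x) i with hvdef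
  have hv : ∀ j, 0 < v j := by
    intro j
    have hveq : v j = ∑ k, x i k * C0 k j := by
      rw [hvdef, iterate_apply_eq_vecMul]; rfl
    rw [hveq]
    have hterm : 0 < x i k₀ * C0 k₀ j := mul_pos hk₀ (hC0 k₀ j)
    have : x i k₀ * C0 k₀ j ≤ ∑ k, x i k * C0 k j :=
      Finset.single_le_sum (fun k _ => mul_nonneg (hx i k) (hC0 k j).le) (Finset.mem_univ k₀)
    linarith
  -- minimum entry c of v
  obtain ⟨j₀, _, hj₀⟩ := Finset.exists_min_image Finset.univ v ⟨k₀, Finset.mem_univ k₀⟩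
  set c := v j₀ with hcdef
  have hc : 0 < c := hv j₀
  have hcv : ∀ j, c ≤ v j := fun j => hj₀ j (Finset.mem_univ j)
  -- bound K on snorm over SA
  have hcont : Continuous fun y : St m n => snorm y i := by
    unfold snorm
    exact continuous_finset_sum _ fun j _ =>
      (((continuous_apply j).comp (continuous_apply i))).abs
  obtain ⟨K, hK⟩ : ∃ K, ∀ y ∈ SA, snorm y i ≤ K := by
    obtain ⟨K, hK⟩ := (hA.H3compact.image hcont).bddAbove
    exact ⟨K, fun y hy => hK ⟨y, hy, rfl⟩⟩
  obtain ⟨T, hT⟩ := hA.H3absorb x hx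
  -- the uniform bound on mnorm (coc t) for t ≥ T + t₀
  set B : ℝ := max (mnorm C0 * (K / c)) 1 with hBdef
  have hB1 : (1 : ℝ) ≤ B := le_max_right _ _
  have hbound : ∀ t ≥ T + t₀, mnorm (coc A i x t) ≤ B := by
    intro t ht
    set s := t - t₀ with hsdef
    have hts : t = t₀ + s := by omega
    set y := (Phi A)^[t₀] x with hydef
    set Cs := coc A i y s with hCsdef
    have hCsn : ∀ j k, 0 ≤ Cs j k := fun j k => coc_nonneg A hAn i y s j k
    -- the orbit point at time t
    have hiter : (Phi A)^[t] x = (Phi A)^[s] y := by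
      rw [hts, add_comm t₀ s, Function.iterate_add_apply]
    have hmemSA : (Phi A)^[t] x ∈ SA := hT t (by omega)
    have hvec : ((Phi A)^[t] x) i = Matrix.vecMul v Cs := by
      rw [hiter, iterate_apply_eq_vecMul]
    -- lower bound c * mnorm Cs ≤ snorm
    have hlow : c * mnorm Cs ≤ snorm ((Phi A)^[t] x) i := by
      have hsn : snorm ((Phi A)^[t] x) i = ∑ j, ∑ k, v k * Cs k j := by
        unfold snorm
        rw [hvec]
        refine Finset.sum_congr rfl fun j _ => ?_
        rw [show Matrix.vecMul v Cs j = ∑ k, v k * Cs k j from rfl]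
        exact abs_of_nonneg (Finset.sum_nonneg fun k _ =>
          mul_nonneg (hv k).le (hCsn k j))
      rw [hsn]
      have : mnorm Cs = ∑ j, ∑ k, Cs k j := by
        unfold mnorm
        rw [Finset.sum_comm]
        exact Finset.sum_congr rfl fun j _ => Finset.sum_congr rfl fun k _ =>
          abs_of_nonneg (hCsn k j)
      rw [this, Finset.mul_sum]
      refine Finset.sum_le_sum fun j _ => ?_
      rw [Finset.mul_sum]
      refine Finset.sum_le_sum fun k _ => ?_
      exact mul_le_mul_of_nonneg_right (hcv k) (hCsn k j)
    have hCsK : mnorm Cs ≤ K / c := by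
      rw [le_div_iff₀ hc]
      calc mnorm Cs * c = c * mnorm Cs := mul_comm _ _
        _ ≤ snorm ((Phi A)^[t] x) i := hlow
        _ ≤ K := hK _ hmemSA
    calc mnorm (coc A i x t) = mnorm (C0 * Cs) := by rw [hts, coc_add]
      _ ≤ mnorm C0 * mnorm Cs := mnorm_mul_le _ _
      _ ≤ mnorm C0 * (K / c) :=
          mul_le_mul_of_nonneg_left hCsK (mnorm_nonneg _)
      _ ≤ B := le_max_left _ _
  -- conclude: limsup of log(mnorm)/t ≤ 0
  have hlogB : 0 ≤ Real.log B := Real.log_nonneg hB1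
  rw [rate, Filter.limsup_eq]
  set S : Set ℝ := {a | ∀ᶠ t in atTop, Real.log (mnorm (coc A i x t)) / (t : ℝ) ≤ a} with hSdef
  by_cases hbdd : BddBelow S
  · refine le_of_forall_pos_le_add fun ε hε => ?_
    rw [zero_add]
    refine csInf_le hbdd ?_
    obtain ⟨N, hN⟩ := exists_nat_ge (Real.log B / ε)
    rw [hSdef, Set.mem_setOf_eq, eventually_atTop]
    refine ⟨T + t₀ + N + 1, fun t ht => ?_⟩
    have htpos : (0 : ℝ) < t := by
      have : 1 ≤ t := by omega
      exact_mod_cast Nat.lt_of_lt_of_le Nat.zero_lt_one this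
    have hmono : Real.log (mnorm (coc A i x t)) ≤ Real.log B := by
      rcases eq_or_lt_of_le (mnorm_nonneg (coc A i x t)) with h | h
      · rw [← h, Real.log_zero]; exact hlogB
      · exact Real.log_le_log h (hbound t (by omega))
    have h1 : Real.log (mnorm (coc A i x t)) / (t : ℝ) ≤ Real.log B / (t : ℝ) := by
      gcongr
    refine h1.trans ?_
    rw [div_le_iff₀ htpos]
    have hNt : (N : ℝ) ≤ (t : ℝ) := by exact_mod_cast (by omega : N ≤ t)
    have : Real.log B ≤ ε * N := by
      rw [div_le_iff₀ hε] at hN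
      linarith [hN]
    nlinarith
  · rw [Real.sInf_of_not_bddBelow hbdd]

end RP
end
end

section
/- Consider the annual plant model with seed bank x^i_{t+1} = g_i x^i_t exp(Y_i − Σ_{j=1}^m C_{ij} g_j x^j_t) + (1−g_i)s_i x^i_t on ℝ^m_+, where Y_i > 0, C_{ij} > 0 for all i,j, s_i ∈ [0,1), and g_i ∈ (0,1]. If there exist positive reals p_1,…,p_m such that Σ_{i=1}^m p_i (Y_i − Σ_{j=1}^m C_{ij} x̂_j) > 0 for every fixed point x̂ in the extinction set S_0 = {x ∈ ℝ^m_+ : ∏_i x_i = 0} of the Lotka–Volterra system x_{t+1}^i = x_t^i exp(Y_i − Σ_j C_{ij} x_t^j), then there exists g̃ ∈ (0,1) such that the annual plant model is permanent for every germination vector g ∈ (g̃,1)^m. -/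
open Filter Topology

noncomputable section

namespace AnnualPlant

/-- The annual plant model with a seed bank:
`x^i ↦ gᵢ xᵢ exp(Yᵢ − ∑ⱼ Cᵢⱼ gⱼ xⱼ) + (1−gᵢ) sᵢ xᵢ`. -/
def APmap {m : ℕ} (Y : Fin m → ℝ) (C : Matrix (Fin m) (Fin m) ℝ)
    (s g : Fin m → ℝ) (x : Fin m → ℝ) : Fin m → ℝ :=
  fun i => g i * x i * Real.exp (Y i - ∑ j, C i j * (g j * x j)) +
    (1 - g i) * s i * x i

section Aux

variable {m : ℕ} (Y : Fin m → ℝ) (C : Matrix (Fin m) (Fin m) ℝ) (s p : Fin m → ℝ)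

/-- Per-capita growth factor of the annual plant map. -/
def ratio (g x : Fin m → ℝ) (i : Fin m) : ℝ :=
  g i * Real.exp (Y i - ∑ j, C i j * (g j * x j)) + (1 - g i) * s i

lemma APmap_eq (g x : Fin m → ℝ) (i : Fin m) :
    APmap Y C s g x i = x i * ratio Y C s g x i := by
  simp only [APmap, ratio]; ring

/-- Upper bound constant for the absorbing cube. -/
def Kc (i : Fin m) : ℝ := Real.exp (Y i - 1) / (C i i * (1 - s i)) + 1

/-- The absorbing cube. -/
def InCube (x : Fin m → ℝ) : Prop := ∀ i, 0 ≤ x i ∧ x i ≤ Kc Y C s i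

/-- The weighted log Lyapunov-type function. -/
def Vf (x : Fin m → ℝ) : ℝ := ∑ i, p i * Real.log (x i)

/-- One-step change of `Vf` (depends only on the per-capita growth). -/
def Gf (g x : Fin m → ℝ) : ℝ := ∑ i, p i * Real.log (ratio Y C s g x i)

/-- `n`-step accumulated change of `Vf`. -/
def Sn (g : Fin m → ℝ) (n : ℕ) (x : Fin m → ℝ) : ℝ :=
  ∑ t ∈ Finset.range n, Gf Y C s p g ((APmap Y C s g)^[t] x)

/-- The linearized growth functional of the Lotka–Volterra system. -/
def Glin (x : Fin m → ℝ) : ℝ := ∑ i, p i * (Y i - ∑ j, C i j * x j)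

/-- The all-ones germination vector (pure Lotka–Volterra dynamics). -/
def onev (m : ℕ) : Fin m → ℝ := fun _ => 1

/-- Weighted yield sum. -/
def PY : ℝ := ∑ i, p i * Y i

/-- The linear part of `Glin`. -/
def Qlin (x : Fin m → ℝ) : ℝ := ∑ i, p i * (∑ j, C i j * x j)

/-- The Cesàro average of the Lotka–Volterra orbit. -/
def cesaro (x : Fin m → ℝ) (n : ℕ) (i : Fin m) : ℝ :=
  (∑ t ∈ Finset.range n, (APmap Y C s (onev m))^[t] x i) / n

lemma u_exp_bound {c u Yv : ℝ} (hc : 0 < c) (hu : 0 ≤ u) :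
    u * Real.exp (Yv - c * u) ≤ Real.exp (Yv - 1) / c := by
  rw [le_div_iff₀ hc]
  have h1 : c * u ≤ Real.exp (c * u - 1) := by
    have := Real.add_one_le_exp (c * u - 1); linarith
  have h2 : Real.exp (Yv - 1) = Real.exp (c*u - 1) * Real.exp (Yv - c*u) := by
    rw [← Real.exp_add]; ring_nf
  rw [h2]
  have h3 : 0 < Real.exp (Yv - c*u) := Real.exp_pos _
  calc u * Real.exp (Yv - c*u) * c = (c*u) * Real.exp (Yv - c*u) := by ring
    _ ≤ Real.exp (c*u-1) * Real.exp (Yv - c*u) :=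
        mul_le_mul_of_nonneg_right h1 h3.le

end Aux

section Basic

variable {m : ℕ} {Y : Fin m → ℝ} {C : Matrix (Fin m) (Fin m) ℝ} {s p : Fin m → ℝ}
variable (hC : ∀ i j, 0 < C i j) (hs : ∀ i, 0 ≤ s i ∧ s i < 1)
include hC hs

lemma Kc_ge_one (i : Fin m) : 1 ≤ Kc Y C s i := by
  have h1 : 0 < C i i * (1 - s i) :=
    mul_pos (hC i i) (by have := (hs i).2; linarith)
  have : 0 ≤ Real.exp (Y i - 1) / (C i i * (1 - s i)) := by positivity
  simp only [Kc]; linarith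

lemma Kc_pos (i : Fin m) : 0 < Kc Y C s i := lt_of_lt_of_le one_pos (Kc_ge_one hC hs i)

lemma ratio_nonneg {g x : Fin m → ℝ} (hg : ∀ i, 0 ≤ g i ∧ g i ≤ 1) (i : Fin m) :
    0 ≤ ratio Y C s g x i := by
  have h1 : 0 ≤ g i * Real.exp (Y i - ∑ j, C i j * (g j * x j)) := by
    have := (hg i).1; positivity
  have h2 : 0 ≤ (1 - g i) * s i := by
    have := (hg i).2; have := (hs i).1; nlinarith
  simp only [ratio]; linarith

lemma ratio_pos {g x : Fin m → ℝ} (hg : ∀ i, 0 < g i ∧ g i ≤ 1) (i : Fin m) :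
    0 < ratio Y C s g x i := by
  have h1 : 0 < g i * Real.exp (Y i - ∑ j, C i j * (g j * x j)) := by
    have := (hg i).1; positivity
  have h2 : 0 ≤ (1 - g i) * s i := by
    have := (hg i).2; have := (hs i).1; nlinarith
  simp only [ratio]; linarith

lemma APmap_coord_nonneg {g x : Fin m → ℝ} (hg : ∀ i, 0 ≤ g i ∧ g i ≤ 1)
    (hx : ∀ i, 0 ≤ x i) (i : Fin m) : 0 ≤ APmap Y C s g x i := by
  rw [APmap_eq]; exact mul_nonneg (hx i) (ratio_nonneg hC hs hg i)

lemma APmap_coord_pos {g x : Fin m → ℝ} (hg : ∀ i, 0 < g i ∧ g i ≤ 1)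
    (i : Fin m) (hx : 0 < x i) : 0 < APmap Y C s g x i := by
  rw [APmap_eq]; exact mul_pos hx (ratio_pos hC hs hg i)

lemma APmap_upper {g x : Fin m → ℝ} (hg : ∀ i, 0 ≤ g i ∧ g i ≤ 1)
    (hx : ∀ i, 0 ≤ x i) (i : Fin m) :
    APmap Y C s g x i ≤ Real.exp (Y i - 1) / C i i + s i * x i := by
  have hterm : ∀ j, 0 ≤ C i j * (g j * x j) := fun j =>
    mul_nonneg (hC i j).le (mul_nonneg (hg j).1 (hx j))
  have hsum : C i i * (g i * x i) ≤ ∑ j, C i j * (g j * x j) :=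
    Finset.single_le_sum (fun j _ => hterm j) (Finset.mem_univ i)
  have h1 : g i * x i * Real.exp (Y i - ∑ j, C i j * (g j * x j))
      ≤ g i * x i * Real.exp (Y i - C i i * (g i * x i)) := by
    apply mul_le_mul_of_nonneg_left _ (mul_nonneg (hg i).1 (hx i))
    exact Real.exp_le_exp.2 (by linarith)
  have h2 : g i * x i * Real.exp (Y i - C i i * (g i * x i))
      ≤ Real.exp (Y i - 1) / C i i :=
    u_exp_bound (hC i i) (mul_nonneg (hg i).1 (hx i))
  have h3 : (1 - g i) * s i * x i ≤ s i * x i := by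
    have h4 : (1 - g i) * (s i * x i) ≤ 1 * (s i * x i) :=
      mul_le_mul_of_nonneg_right (by have := (hg i).1; linarith)
        (mul_nonneg (hs i).1 (hx i))
    nlinarith
  simp only [APmap]; linarith

lemma cube_invariant {g x : Fin m → ℝ} (hg : ∀ i, 0 ≤ g i ∧ g i ≤ 1)
    (hx : InCube Y C s x) : InCube Y C s (APmap Y C s g x) := by
  intro i
  refine ⟨APmap_coord_nonneg hC hs hg (fun j => (hx j).1) i, ?_⟩
  have h1 := APmap_upper (Y:=Y) hC hs hg (fun j => (hx j).1) i
  have h2 : s i * x i ≤ s i * Kc Y C s i :=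
    mul_le_mul_of_nonneg_left (hx i).2 (hs i).1
  have hsi1 : 0 < 1 - s i := by have := (hs i).2; linarith
  have hci : 0 < C i i := hC i i
  have key : Real.exp (Y i - 1) / C i i + s i * Kc Y C s i ≤ Kc Y C s i := by
    simp only [Kc]
    have hA : 0 ≤ Real.exp (Y i - 1) / (C i i) := by positivity
    have hrw : Real.exp (Y i - 1) / (C i i * (1 - s i))
        = Real.exp (Y i - 1) / C i i / (1 - s i) := by
      rw [div_div]
    rw [hrw]
    set A := Real.exp (Y i - 1) / C i i with hAdef
    have : A + s i * (A / (1 - s i) + 1) = A / (1 - s i) + s i := by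
      field_simp; ring
    rw [this]
    have := (hs i).2; linarith
  calc APmap Y C s g x i ≤ Real.exp (Y i - 1) / C i i + s i * x i := h1
    _ ≤ Real.exp (Y i - 1) / C i i + s i * Kc Y C s i := by linarith
    _ ≤ Kc Y C s i := key

lemma cube_invariant_iter {g x : Fin m → ℝ} (hg : ∀ i, 0 ≤ g i ∧ g i ≤ 1)
    (hx : InCube Y C s x) (n : ℕ) : InCube Y C s ((APmap Y C s g)^[n] x) := by
  induction n with
  | zero => exact hx
  | succ n ih =>
      rw [Function.iterate_succ_apply']
      exact cube_invariant hC hs hg ih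

lemma pos_iter {g x : Fin m → ℝ} (hg : ∀ i, 0 < g i ∧ g i ≤ 1)
    (hx : ∀ i, 0 < x i) (n : ℕ) (i : Fin m) : 0 < (APmap Y C s g)^[n] x i := by
  induction n generalizing i with
  | zero => exact hx i
  | succ n ih =>
      rw [Function.iterate_succ_apply']
      exact APmap_coord_pos hC hs hg i (ih i)

omit hC hs in
lemma zero_iter {g x : Fin m → ℝ} (hx : x i = 0) (n : ℕ) :
    (APmap Y C s g)^[n] x i = 0 := by
  induction n with
  | zero => exact hx
  | succ n ih =>
      rw [Function.iterate_succ_apply', APmap_eq, ih, zero_mul]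

omit hC hs in
lemma ratio_one (x : Fin m → ℝ) (i : Fin m) :
    ratio Y C s (onev m) x i = Real.exp (Y i - ∑ j, C i j * x j) := by
  simp [ratio, onev]

omit hC hs in
lemma Gf_one (x : Fin m → ℝ) : Gf Y C s p (onev m) x = Glin Y C p x := by
  simp [Gf, Glin, ratio_one, Real.log_exp]

end Basic

section Identities

variable {m : ℕ} {Y : Fin m → ℝ} {C : Matrix (Fin m) (Fin m) ℝ} {s p : Fin m → ℝ}
variable (hC : ∀ i j, 0 < C i j) (hs : ∀ i, 0 ≤ s i ∧ s i < 1)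

include hC hs in
lemma Vf_step {g x : Fin m → ℝ} (hg : ∀ i, 0 < g i ∧ g i ≤ 1)
    (hx : ∀ i, 0 < x i) :
    Vf p (APmap Y C s g x) = Vf p x + Gf Y C s p g x := by
  simp only [Vf, Gf, ← Finset.sum_add_distrib]
  apply Finset.sum_congr rfl
  intro i _
  rw [APmap_eq, Real.log_mul (hx i).ne' (ratio_pos hC hs hg i).ne']
  ring

include hC hs in
lemma Vf_telescope {g x : Fin m → ℝ} (hg : ∀ i, 0 < g i ∧ g i ≤ 1)
    (hx : ∀ i, 0 < x i) (n : ℕ) :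
    Vf p ((APmap Y C s g)^[n] x) = Vf p x + Sn Y C s p g n x := by
  induction n with
  | zero => simp [Sn]
  | succ n ih =>
      rw [Function.iterate_succ_apply',
        Vf_step hC hs hg (fun i => pos_iter hC hs hg hx n i), ih]
      simp only [Sn, Finset.sum_range_succ]
      ring

lemma Sn_cocycle (g : Fin m → ℝ) (a b : ℕ) (x : Fin m → ℝ) :
    Sn Y C s p g (a + b) x = Sn Y C s p g a x + Sn Y C s p g b ((APmap Y C s g)^[a] x) := by
  induction b with
  | zero => simp [Sn]
  | succ b ih =>
      have e1 : a + (b + 1) = (a + b) + 1 := by omega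
      rw [e1]
      simp only [Sn, Finset.sum_range_succ] at ih ⊢
      rw [ih, ← Function.iterate_add_apply, Nat.add_comm b a]
      ring

lemma Glin_eq (x : Fin m → ℝ) :
    Glin Y C p x = PY Y p - Qlin C p x := by
  simp only [Glin, PY, Qlin, mul_sub, Finset.sum_sub_distrib]

lemma Qlin_add (x y : Fin m → ℝ) :
    Qlin C p (fun i => x i + y i) = Qlin C p x + Qlin C p y := by
  simp only [Qlin, mul_add, Finset.sum_add_distrib]

lemma Qlin_sum (n : ℕ) (w : ℕ → Fin m → ℝ) :
    Qlin C p (fun i => ∑ t ∈ Finset.range n, w t i)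
      = ∑ t ∈ Finset.range n, Qlin C p (w t) := by
  induction n with
  | zero => simp [Qlin]
  | succ n ih =>
      have e : (fun i => ∑ t ∈ Finset.range (n+1), w t i)
          = fun i => (∑ t ∈ Finset.range n, w t i) + w n i := by
        funext i; rw [Finset.sum_range_succ]
      rw [e, Qlin_add, ih, Finset.sum_range_succ]

lemma Qlin_smul (c : ℝ) (x : Fin m → ℝ) :
    Qlin C p (fun i => c * x i) = c * Qlin C p x := by
  simp only [Qlin, Finset.mul_sum]
  apply Finset.sum_congr rfl
  intro i _
  apply Finset.sum_congr rfl
  intro j _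
  ring

lemma pos_iter_one {x : Fin m → ℝ} (i : Fin m) (hxi : 0 < x i) (n : ℕ) :
    0 < (APmap Y C s (onev m))^[n] x i := by
  induction n with
  | zero => exact hxi
  | succ k ihk =>
      rw [Function.iterate_succ_apply', APmap_eq, ratio_one]
      exact mul_pos ihk (Real.exp_pos _)

lemma cesaro_eq (x : Fin m → ℝ) (n : ℕ) (i : Fin m) :
    cesaro Y C s x n i
      = (∑ t ∈ Finset.range n, (APmap Y C s (onev m))^[t] x i) / n := rfl

lemma Glin_cesaro {x : Fin m → ℝ} {n : ℕ} (hn : 0 < n) :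
    Glin Y C p (cesaro Y C s x n) = Sn Y C s p (onev m) n x / n := by
  have hSn : Sn Y C s p (onev m) n x
      = ∑ t ∈ Finset.range n, Glin Y C p ((APmap Y C s (onev m))^[t] x) := by
    simp only [Sn, Gf_one]
  have hc : (cesaro Y C s x n) = fun i =>
      (n : ℝ)⁻¹ * (∑ t ∈ Finset.range n, (APmap Y C s (onev m))^[t] x i) := by
    funext i; rw [cesaro_eq, div_eq_inv_mul]
  rw [Glin_eq, hc, Qlin_smul, Qlin_sum, hSn]
  have hnne : (n : ℝ) ≠ 0 := Nat.cast_ne_zero.2 hn.ne'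
  simp only [Glin_eq]
  rw [Finset.sum_sub_distrib, Finset.sum_const, Finset.card_range, nsmul_eq_mul]
  field_simp

lemma log_orbit {x : Fin m → ℝ} (i : Fin m) (hxi : 0 < x i) (n : ℕ) :
    Real.log ((APmap Y C s (onev m))^[n] x i)
      = Real.log (x i)
        + ∑ t ∈ Finset.range n, (Y i - ∑ j, C i j * (APmap Y C s (onev m))^[t] x j) := by
  induction n with
  | zero => simp
  | succ n ih =>
      rw [Function.iterate_succ_apply', APmap_eq, ratio_one,
        Real.log_mul (pos_iter_one i hxi n).ne' (Real.exp_pos _).ne', Real.log_exp, ih,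
        Finset.sum_range_succ]
      ring

end Identities

section Combinatorial

lemma no_chain (w : ℕ → ℝ) (B ε : ℝ) (hε : 0 < ε) (hub : ∀ j, w j ≤ B)
    (hg : ∀ j, ∃ n, 1 ≤ n ∧ w j + ε ≤ w (j + n)) : False := by
  have key : ∀ l : ℕ, ∃ j, w 0 + l * ε ≤ w j := by
    intro l
    induction l with
    | zero => exact ⟨0, by simp⟩
    | succ l ih =>
        obtain ⟨j, hj⟩ := ih
        obtain ⟨n, _, hn2⟩ := hg j
        exact ⟨j + n, by push_cast; linarith⟩
  obtain ⟨l, hl⟩ := exists_nat_gt ((B - w 0) / ε)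
  obtain ⟨j, hj⟩ := key l
  have h1 := hub j
  have h2 : (B - w 0) / ε * ε < l * ε := mul_lt_mul_of_pos_right hl hε
  rw [div_mul_cancel₀ _ hε.ne'] at h2
  linarith

lemma iter_lower (v : ℕ → ℝ) (M : ℝ) (h3 : ∀ t, v t - M ≤ v (t + 1)) (q d : ℕ) :
    v q - d * M ≤ v (q + d) := by
  induction d with
  | zero => simp
  | succ d ih =>
      have h := h3 (q + d)
      have e : q + (d + 1) = (q + d) + 1 := by omega
      rw [e]
      push_cast
      push_cast at ih
      linarith

lemma eventually_ge (v : ℕ → ℝ) (β : ℕ → Prop) (A Vmax ε M : ℝ) (N : ℕ)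
    (hN : 1 ≤ N) (hε : 0 < ε) (hM : 0 ≤ M)
    (h1 : ∀ t, ¬ β t → A ≤ v t)
    (h2 : ∀ t, β t → ∃ n, 1 ≤ n ∧ n ≤ N ∧ v t + ε ≤ v (t + n))
    (h3 : ∀ t, v t - M ≤ v (t + 1))
    (h4 : ∀ t, v t ≤ Vmax) :
    ∃ T, ∀ u, T ≤ u → A - N * M ≤ v u := by
  have hstar : ∃ t0, ¬ β t0 := by
    by_contra hall
    push_neg at hall
    exact no_chain v Vmax ε hε h4 (fun j => by
      obtain ⟨n, hn1, _, hn3⟩ := h2 j (hall j); exact ⟨n, hn1, hn3⟩)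
  obtain ⟨t0, ht0⟩ := hstar
  set P : ℕ → Prop := fun u => ∃ q, q ≤ u ∧ A - M ≤ v q ∧
      ((¬ β q ∧ q = u) ∨ ∃ n, 1 ≤ n ∧ n ≤ N ∧ v q + ε ≤ v (q + n) ∧ u < q + n) with hP
  have hPall : ∀ u, t0 ≤ u → P u := by
    intro u hu
    induction u, hu using Nat.le_induction with
    | base =>
        exact ⟨t0, le_refl _, by have := h1 t0 ht0; linarith, Or.inl ⟨ht0, rfl⟩⟩
    | succ u hu ih =>
        obtain ⟨q, hq1, hq2, hq3⟩ := ih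
        by_cases hb : β (u + 1)
        · rcases hq3 with ⟨hnb, rfl⟩ | ⟨n, hn1, hnN, hgain, hlt⟩
          · obtain ⟨n', hn'1, hn'N, hg'⟩ := h2 (q + 1) hb
            refine ⟨q + 1, le_refl _, ?_, Or.inr ⟨n', hn'1, hn'N, hg', by omega⟩⟩
            have := h3 q
            have := h1 q hnb
            linarith
          · by_cases hlt2 : u + 1 < q + n
            · exact ⟨q, by omega, hq2, Or.inr ⟨n, hn1, hnN, hgain, hlt2⟩⟩
            · have he : q + n = u + 1 := by omega
              obtain ⟨n', hn'1, hn'N, hg'⟩ := h2 (u + 1) hb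
              refine ⟨u + 1, le_refl _, ?_, Or.inr ⟨n', hn'1, hn'N, hg', by omega⟩⟩
              have hv : v q + ε ≤ v (u + 1) := he ▸ hgain
              linarith
        · exact ⟨u + 1, le_refl _, by have := h1 (u + 1) hb; linarith, Or.inl ⟨hb, rfl⟩⟩
  refine ⟨t0, fun u hu => ?_⟩
  obtain ⟨q, hq1, hq2, hq3⟩ := hPall u hu
  have hNM : 0 ≤ (N : ℝ) * M := mul_nonneg (by positivity) hM
  rcases hq3 with ⟨hnb, rfl⟩ | ⟨n, hn1, hnN, hgain, hlt⟩
  · have := h1 q hnb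
    linarith
  · have hd : u - q ≤ N - 1 := by omega
    have hil := iter_lower v M h3 q (u - q)
    have he : q + (u - q) = u := by omega
    rw [he] at hil
    have hcast : ((u - q : ℕ) : ℝ) ≤ (N : ℝ) - 1 := by
      calc ((u - q : ℕ) : ℝ) ≤ ((N - 1 : ℕ) : ℝ) := Nat.cast_le.2 hd
        _ = (N : ℝ) - 1 := by rw [Nat.cast_sub hN]; norm_num
    have hmul : ((u - q : ℕ) : ℝ) * M ≤ ((N : ℝ) - 1) * M :=
      mul_le_mul_of_nonneg_right hcast hM
    linarith

lemma exists_freq_eq {α : Type*} [Finite α] (f : ℕ → α) :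
    ∃ a, ∃ᶠ n in Filter.atTop, f n = a := by
  obtain ⟨a, ha⟩ := Finite.exists_infinite_fiber f
  refine ⟨a, Nat.frequently_atTop_iff_infinite.2 ?_⟩
  have : (f ⁻¹' {a}).Infinite := Set.infinite_coe_iff.1 ha
  convert this using 1
  ext n; simp

end Combinatorial

section Continuity

variable {m : ℕ} (Y : Fin m → ℝ) (C : Matrix (Fin m) (Fin m) ℝ) (s p : Fin m → ℝ)

/-- Joint iterate of the annual plant map in `(g, x)`. -/
def itn : ℕ → ((Fin m → ℝ) × (Fin m → ℝ)) → (Fin m → ℝ)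
  | 0, gx => gx.2
  | (n+1), gx => APmap Y C s gx.1 (itn n gx)

lemma itn_eq (n : ℕ) (gx : (Fin m → ℝ) × (Fin m → ℝ)) :
    itn Y C s n gx = (APmap Y C s gx.1)^[n] gx.2 := by
  induction n with
  | zero => rfl
  | succ n ih =>
      show APmap Y C s gx.1 (itn Y C s n gx) = _
      rw [ih]; exact (Function.iterate_succ_apply' _ _ _).symm

lemma continuous_APmap2 :
    Continuous (fun gx : (Fin m → ℝ) × (Fin m → ℝ) => APmap Y C s gx.1 gx.2) := by
  apply continuous_pi
  intro i
  simp only [APmap]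
  apply Continuous.add
  · apply Continuous.mul
    · exact ((continuous_apply i).comp continuous_fst).mul
        ((continuous_apply i).comp continuous_snd)
    · apply Real.continuous_exp.comp
      apply Continuous.sub continuous_const
      apply continuous_finset_sum
      intro j _
      exact continuous_const.mul (((continuous_apply j).comp continuous_fst).mul
        ((continuous_apply j).comp continuous_snd))
  · exact ((continuous_const.sub ((continuous_apply i).comp continuous_fst)).mul
      continuous_const).mul ((continuous_apply i).comp continuous_snd)

lemma continuous_itn (n : ℕ) : Continuous (itn Y C s n) := by
  induction n with
  | zero => exact continuous_snd
  | succ n ih =>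
      show Continuous (fun gx => APmap Y C s gx.1 (itn Y C s n gx))
      exact (continuous_APmap2 Y C s).comp (continuous_fst.prodMk ih)

lemma continuous_ratio2 (i : Fin m) :
    Continuous (fun gx : (Fin m → ℝ) × (Fin m → ℝ) => ratio Y C s gx.1 gx.2 i) := by
  simp only [ratio]
  apply Continuous.add
  · apply Continuous.mul
    · exact (continuous_apply i).comp continuous_fst
    · apply Real.continuous_exp.comp
      apply Continuous.sub continuous_const
      apply continuous_finset_sum
      intro j _
      exact continuous_const.mul (((continuous_apply j).comp continuous_fst).mul
        ((continuous_apply j).comp continuous_snd))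
  · exact (continuous_const.sub ((continuous_apply i).comp continuous_fst)).mul
      continuous_const

/-- `Sn` as a jointly continuous function of `(g, x)`. -/
def Snx (n : ℕ) (gx : (Fin m → ℝ) × (Fin m → ℝ)) : ℝ :=
  ∑ t ∈ Finset.range n, Gf Y C s p gx.1 (itn Y C s t gx)

lemma Snx_eq (n : ℕ) (g x : Fin m → ℝ) :
    Snx Y C s p n (g, x) = Sn Y C s p g n x := by
  simp only [Snx, Sn]
  apply Finset.sum_congr rfl
  intro t _
  rw [itn_eq]

lemma continuousAt_Snx (n : ℕ) (g₀ x₀ : Fin m → ℝ)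
    (h : ∀ t, ∀ i, ratio Y C s g₀ (itn Y C s t (g₀, x₀)) i ≠ 0) :
    ContinuousAt (Snx Y C s p n) (g₀, x₀) := by
  apply tendsto_finset_sum
  intro t _
  apply tendsto_finset_sum
  intro i _
  apply ContinuousAt.mul continuousAt_const
  have hcont : Continuous (fun gx : (Fin m → ℝ) × (Fin m → ℝ) =>
      ratio Y C s gx.1 (itn Y C s t gx) i) :=
    (continuous_ratio2 Y C s i).comp (continuous_fst.prodMk (continuous_itn Y C s t))
  exact hcont.continuousAt.log (h t i)

lemma continuousAt_Snx_one (n : ℕ) (x₀ : Fin m → ℝ) :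
    ContinuousAt (Snx Y C s p n) (onev m, x₀) := by
  apply continuousAt_Snx
  intro t i
  rw [ratio_one]
  exact (Real.exp_pos _).ne'

lemma continuous_Glin : Continuous (Glin Y C p) := by
  apply continuous_finset_sum
  intro i _
  apply Continuous.mul continuous_const
  apply Continuous.sub continuous_const
  apply continuous_finset_sum
  intro j _
  exact continuous_const.mul (continuous_apply j)

end Continuity

section Boundary

variable {m : ℕ} {Y : Fin m → ℝ} {C : Matrix (Fin m) (Fin m) ℝ} {s p : Fin m → ℝ}
variable (hC : ∀ i j, 0 < C i j) (hs : ∀ i, 0 ≤ s i ∧ s i < 1)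

lemma InCube_iff_Icc (x : Fin m → ℝ) :
    InCube Y C s x ↔ x ∈ Set.Icc (0 : Fin m → ℝ) (Kc Y C s) := by
  simp only [Set.mem_Icc, Pi.le_def, InCube, Pi.zero_apply]
  constructor
  · exact fun h => ⟨fun i => (h i).1, fun i => (h i).2⟩
  · exact fun h i => ⟨h.1 i, h.2 i⟩

lemma tendsto_one_div_sub (φ : ℕ → ℕ) (hφ : StrictMono φ) :
    Filter.Tendsto (fun l => 1 / ((φ l : ℝ) + 1)) Filter.atTop (nhds 0) := by
  apply Filter.Tendsto.comp tendsto_one_div_add_atTop_nhds_zero_nat hφ.tendsto_atTop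

set_option maxHeartbeats 1000000 in
/-- Uniform neighborhood version of the boundary growth condition. -/
lemma Vprime (k : ℕ)
    (hpt : ∀ y : Fin m → ℝ, InCube Y C s y →
      (∃ T : Finset (Fin m), m + 1 ≤ T.card + k ∧ ∀ i ∈ T, y i = 0) →
      ∃ n, 1 ≤ n ∧ 0 < Sn Y C s p (onev m) n y) :
    ∃ ρ : ℝ, 0 < ρ ∧ ∃ N : ℕ, ∃ ε : ℝ, 0 < ε ∧
      ∀ y : Fin m → ℝ, InCube Y C s y →
        (∃ T : Finset (Fin m), m + 1 ≤ T.card + k ∧ ∀ i ∈ T, y i < ρ) →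
        ∃ n, 1 ≤ n ∧ n ≤ N ∧ ε ≤ Sn Y C s p (onev m) n y := by
  by_contra hcon
  push_neg at hcon
  have H : ∀ j : ℕ, ∃ y : Fin m → ℝ, InCube Y C s y ∧
      ((∃ T : Finset (Fin m), m + 1 ≤ T.card + k ∧ ∀ i ∈ T, y i < 1/((j:ℝ)+1)) ∧
      ∀ n, 1 ≤ n → n ≤ j + 1 → Sn Y C s p (onev m) n y < 1/((j:ℝ)+1)) := by
    intro j
    have hpos : (0:ℝ) < 1/((j:ℝ)+1) := by positivity
    obtain ⟨y, hy1, hy2, hy3⟩ := hcon (1/((j:ℝ)+1)) hpos (j+1) (1/((j:ℝ)+1)) hpos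
    exact ⟨y, hy1, hy2, fun n h1 h2 => by
      have := hy3 n h1 h2; linarith⟩
  choose yf hy1 hy2 using H
  choose hyT hy3 using hy2
  choose Tf hT1 hT2 using hyT
  obtain ⟨T, hTfreq⟩ := exists_freq_eq Tf
  obtain ⟨φ₁, hφ₁mono, hφ₁⟩ := Filter.extraction_of_frequently_atTop hTfreq
  have hcube_cpt : IsCompact (Set.Icc (0 : Fin m → ℝ) (Kc Y C s)) := isCompact_Icc
  have hmem : ∀ j, (fun l => yf (φ₁ l)) j ∈ Set.Icc (0 : Fin m → ℝ) (Kc Y C s) :=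
    fun j => (InCube_iff_Icc _).1 (hy1 (φ₁ j))
  obtain ⟨ystar, hystar_mem, φ₂, hφ₂mono, hconv⟩ := hcube_cpt.tendsto_subseq hmem
  set ψ : ℕ → ℕ := φ₁ ∘ φ₂ with hψ
  have hψmono : StrictMono ψ := hφ₁mono.comp hφ₂mono
  have hψle : ∀ l, l ≤ ψ l := fun l => hψmono.le_apply
  have hystar_cube : InCube Y C s ystar := (InCube_iff_Icc _).2 hystar_mem
  have hconv' : Filter.Tendsto (fun l => yf (ψ l)) Filter.atTop (nhds ystar) := hconv
  -- coordinates in T vanish at the limit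
  have hzeroT : ∀ i ∈ T, ystar i = 0 := by
    intro i hi
    have hcoord : Filter.Tendsto (fun l => yf (ψ l) i) Filter.atTop (nhds (ystar i)) :=
      (continuous_apply i).continuousAt.tendsto.comp hconv'
    have hub : ∀ l, yf (ψ l) i ≤ 1/((ψ l : ℝ)+1) := by
      intro l
      have hTl : Tf (φ₁ (φ₂ l)) = T := hφ₁ (φ₂ l)
      have := hT2 (ψ l) i (by rw [hψ]; simp only [Function.comp_apply]; rw [hTl]; exact hi)
      exact this.le
    have h0 : ystar i ≤ 0 :=
      le_of_tendsto_of_tendsto hcoord (tendsto_one_div_sub ψ hψmono)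
        (Filter.Eventually.of_forall hub)
    exact le_antisymm h0 (hystar_cube i).1
  have hTcard : m + 1 ≤ T.card + k := by
    have h := hT1 (φ₁ 0)
    rwa [hφ₁ 0] at h
  obtain ⟨n₀, hn₀1, hn₀pos⟩ := hpt ystar hystar_cube ⟨T, hTcard, hzeroT⟩
  -- continuity: Sn one n₀ (yf (ψ l)) → Sn one n₀ ystar
  have hCA := continuousAt_Snx_one Y C s p n₀ ystar
  have hprod_tendsto : Filter.Tendsto (fun l => ((onev m : Fin m → ℝ), yf (ψ l)))
      Filter.atTop (nhds ((onev m : Fin m → ℝ), ystar)) :=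
    Filter.Tendsto.prodMk_nhds tendsto_const_nhds hconv'
  have hSn_tendsto : Filter.Tendsto (fun l => Sn Y C s p (onev m) n₀ (yf (ψ l)))
      Filter.atTop (nhds (Sn Y C s p (onev m) n₀ ystar)) := by
    have h := hCA.tendsto.comp hprod_tendsto
    have he : (Snx Y C s p n₀ ∘ fun l => ((onev m : Fin m → ℝ), yf (ψ l)))
        = fun l => Sn Y C s p (onev m) n₀ (yf (ψ l)) := by
      funext l; exact Snx_eq Y C s p n₀ (onev m) (yf (ψ l))
    rw [he] at h
    rwa [Snx_eq] at h
  have hub2 : ∀ᶠ l in Filter.atTop, Sn Y C s p (onev m) n₀ (yf (ψ l)) ≤ 1/((ψ l : ℝ)+1) := by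
    filter_upwards [Filter.eventually_ge_atTop n₀] with l hl
    exact (hy3 (ψ l) n₀ hn₀1 (by have := hψle l; omega)).le
  have : Sn Y C s p (onev m) n₀ ystar ≤ 0 :=
    le_of_tendsto_of_tendsto hSn_tendsto (tendsto_one_div_sub ψ hψmono) hub2
  linarith

end Boundary

section Cesaro

variable {m : ℕ} {Y : Fin m → ℝ} {C : Matrix (Fin m) (Fin m) ℝ} {s p : Fin m → ℝ}
variable (hC : ∀ i j, 0 < C i j) (hs : ∀ i, 0 ≤ s i ∧ s i < 1)

lemma onev_prop : ∀ i : Fin m, (0:ℝ) ≤ onev m i ∧ onev m i ≤ 1 :=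
  fun _ => ⟨zero_le_one, le_rfl⟩

include hC hs in
lemma cesaro_mem {x : Fin m → ℝ} (hx : InCube Y C s x) {n : ℕ} (hn : 0 < n) :
    cesaro Y C s x n ∈ Set.Icc (0 : Fin m → ℝ) (Kc Y C s) := by
  have horb : ∀ t, InCube Y C s ((APmap Y C s (onev m))^[t] x) :=
    fun t => cube_invariant_iter hC hs onev_prop hx t
  have hnpos : (0:ℝ) < n := Nat.cast_pos.2 hn
  constructor <;> rw [Pi.le_def] <;> intro i
  · rw [Pi.zero_apply, cesaro_eq]
    apply div_nonneg _ hnpos.le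
    exact Finset.sum_nonneg (fun t _ => (horb t i).1)
  · rw [cesaro_eq, div_le_iff₀ hnpos]
    calc ∑ t ∈ Finset.range n, (APmap Y C s (onev m))^[t] x i
        ≤ ∑ _t ∈ Finset.range n, Kc Y C s i :=
          Finset.sum_le_sum (fun t _ => (horb t i).2)
      _ = n * Kc Y C s i := by rw [Finset.sum_const, Finset.card_range, nsmul_eq_mul]
      _ = Kc Y C s i * n := mul_comm _ _

lemma cesaro_log {x : Fin m → ℝ} (i : Fin m) (hxi : 0 < x i) {n : ℕ} (hn : 0 < n) :
    Y i - ∑ j, C i j * cesaro Y C s x n j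
      = (Real.log ((APmap Y C s (onev m))^[n] x i) - Real.log (x i)) / n := by
  have hnne : (n:ℝ) ≠ 0 := Nat.cast_ne_zero.2 hn.ne'
  have hsum : ∑ t ∈ Finset.range n, (Y i - ∑ j, C i j * (APmap Y C s (onev m))^[t] x j)
      = (n:ℝ) * (Y i - ∑ j, C i j * cesaro Y C s x n j) := by
    rw [Finset.sum_sub_distrib, Finset.sum_const, Finset.card_range, nsmul_eq_mul, mul_sub]
    congr 1
    rw [Finset.sum_comm, Finset.mul_sum]
    apply Finset.sum_congr rfl
    intro j _
    rw [cesaro_eq, ← Finset.mul_sum]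
    field_simp
  rw [log_orbit i hxi n]
  have he : Real.log (x i)
      + (∑ t ∈ Finset.range n, (Y i - ∑ j, C i j * (APmap Y C s (onev m))^[t] x j))
      - Real.log (x i)
      = ∑ t ∈ Finset.range n, (Y i - ∑ j, C i j * (APmap Y C s (onev m))^[t] x j) := by
    ring
  rw [he, hsum, mul_comm, mul_div_assoc, div_self hnne, mul_one]

end Cesaro

section LemmaA

variable {m : ℕ} {Y : Fin m → ℝ} {C : Matrix (Fin m) (Fin m) ℝ} {s p : Fin m → ℝ}
variable (hC : ∀ i j, 0 < C i j) (hs : ∀ i, 0 ≤ s i ∧ s i < 1)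

include hC hs in
set_option maxHeartbeats 1000000 in
/-- Pointwise boundary growth: from every boundary point of the cube, the
accumulated Lotka–Volterra growth eventually becomes positive. -/
lemma lemmaA (hfix : ∀ x : Fin m → ℝ, (∀ i, 0 ≤ x i) →
      (∀ i, x i * Real.exp (Y i - ∑ j, C i j * x j) = x i) →
      (∏ i, x i) = 0 →
      0 < ∑ i, p i * (Y i - ∑ j, C i j * x j)) :
    ∀ x : Fin m → ℝ, InCube Y C s x → (∏ i, x i) = 0 →
      ∃ n, 1 ≤ n ∧ 0 < Sn Y C s p (onev m) n x := by
  suffices H : ∀ k : ℕ, ∀ x : Fin m → ℝ, InCube Y C s x → (∏ i, x i) = 0 →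
      (Finset.univ.filter (fun i => x i ≠ 0)).card ≤ k →
      ∃ n, 1 ≤ n ∧ 0 < Sn Y C s p (onev m) n x by
    intro x hx hprod
    exact H (Finset.univ.filter (fun i => x i ≠ 0)).card x hx hprod le_rfl
  intro k
  induction k with
  | zero =>
      intro x hx hprod hcard
      refine ⟨1, le_rfl, ?_⟩
      have hx0 : ∀ i, x i = 0 := by
        intro i
        by_contra h0
        have hmem : i ∈ Finset.univ.filter (fun i => x i ≠ 0) := by simp [h0]
        have := Finset.card_pos.2 ⟨i, hmem⟩
        omega
      have hfixed : ∀ i, x i * Real.exp (Y i - ∑ j, C i j * x j) = x i := by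
        intro i; rw [hx0 i, zero_mul]
      have hpos := hfix x (fun i => (hx i).1) hfixed hprod
      have hSn1 : Sn Y C s p (onev m) 1 x = Glin Y C p x := by
        simp [Sn, Gf_one, Glin]
      rw [hSn1]
      exact hpos
  | succ k ih =>
      intro x hx hprod hcard
      by_cases hsmall : (Finset.univ.filter (fun i => x i ≠ 0)).card ≤ k
      · exact ih x hx hprod hsmall
      push_neg at hsmall
      set S := Finset.univ.filter (fun i => x i ≠ 0) with hS
      have hcard' : S.card = k + 1 := le_antisymm hcard hsmall
      obtain ⟨i₀, _, hi₀⟩ := Finset.prod_eq_zero_iff.1 hprod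
      have hi₀S : i₀ ∉ S := by simp [hS, hi₀]
      have hSm : S.card ≤ m - 1 := by
        have hsub : S ⊆ Finset.univ.erase i₀ := by
          intro i hi
          refine Finset.mem_erase.2 ⟨?_, Finset.mem_univ i⟩
          rintro rfl; exact hi₀S hi
        have h := Finset.card_le_card hsub
        rwa [Finset.card_erase_of_mem (Finset.mem_univ i₀), Finset.card_univ,
          Fintype.card_fin] at h
      obtain ⟨ρ, hρ, N, ε, hε, hV⟩ := Vprime (k + 1) (by
        rintro y hy ⟨T, hTc, hTz⟩
        apply ih y hy
        · have hTne : T.Nonempty := by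
            apply Finset.card_pos.1
            omega
          obtain ⟨i, hiT⟩ := hTne
          exact Finset.prod_eq_zero (Finset.mem_univ i) (hTz i hiT)
        · have hsub : Finset.univ.filter (fun i => y i ≠ 0) ⊆ Tᶜ := by
            intro i hi
            simp only [Finset.mem_filter] at hi
            refine Finset.mem_compl.2 (fun hiT => hi.2 (hTz i hiT))
          have h1 := Finset.card_le_card hsub
          have h2 : Tᶜ.card = m - T.card := by
            rw [Finset.card_compl, Fintype.card_fin]
          have h3 : T.card ≤ m := by simpa using Finset.card_le_univ T
          omega)
      by_contra hcon
      push_neg at hcon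
      have hcon' : ∀ n, 1 ≤ n → Sn Y C s p (onev m) n x ≤ 0 := fun n h1 => by
        obtain ⟨n', hn'⟩ := Nat.exists_eq_add_of_le h1
        exact hcon n h1
      set orb : ℕ → Fin m → ℝ := fun t => (APmap Y C s (onev m))^[t] x with horbdef
      have horb_cube : ∀ t, InCube Y C s (orb t) :=
        fun t => cube_invariant_iter hC hs onev_prop hx t
      have horb_pos : ∀ i ∈ S, ∀ t, 0 < orb t i := by
        intro i hi t
        have hne : x i ≠ 0 := (Finset.mem_filter.1 hi).2
        exact pos_iter_one i ((hx i).1.lt_of_ne (Ne.symm hne)) t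
      have horb_zero : ∀ i, i ∉ S → ∀ t, orb t i = 0 := by
        intro i hi t
        have hxi : x i = 0 := by
          by_contra h0
          exact hi (Finset.mem_filter.2 ⟨Finset.mem_univ i, h0⟩)
        exact zero_iter hxi t
      by_cases hfreq : ∃ᶠ t in Filter.atTop, ∀ i ∈ S, ρ ≤ orb t i
      · obtain ⟨φ, hφmono, hφ⟩ := Filter.extraction_of_frequently_atTop hfreq
        set ν : ℕ → ℕ := fun l => φ (l + 1) with hν
        have hνmono : StrictMono ν := fun a b hab => hφmono (by omega)
        have hνpos : ∀ l, 0 < ν l :=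
          fun l => lt_of_lt_of_le (Nat.succ_pos l) (hφmono.le_apply)
        have hcz_mem : ∀ l, cesaro Y C s x (ν l) ∈ Set.Icc (0:Fin m → ℝ) (Kc Y C s) :=
          fun l => cesaro_mem hC hs hx (hνpos l)
        obtain ⟨z, hz_mem, φ₂, hφ₂mono, hzconv⟩ := (isCompact_Icc).tendsto_subseq hcz_mem
        set μ : ℕ → ℕ := fun l => ν (φ₂ l) with hμ
        have hμmono : StrictMono μ := hνmono.comp hφ₂mono
        have hμpos : ∀ l, 0 < μ l := fun l => hνpos _
        have hμtend : Filter.Tendsto (fun l => (μ l : ℝ)) Filter.atTop Filter.atTop :=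
          tendsto_natCast_atTop_atTop.comp hμmono.tendsto_atTop
        have hzconv' : Filter.Tendsto (fun l => cesaro Y C s x (μ l))
            Filter.atTop (nhds z) := hzconv
        have hz_zero : ∀ i, i ∉ S → z i = 0 := by
          intro i hi
          have hcz0 : (fun l => cesaro Y C s x (μ l) i) = fun _ => (0:ℝ) := by
            funext l
            rw [cesaro_eq, Finset.sum_eq_zero (fun t _ => horb_zero i hi t), zero_div]
          have hcoord : Filter.Tendsto (fun l => cesaro Y C s x (μ l) i)
              Filter.atTop (nhds (z i)) :=
            ((continuous_apply i).continuousAt.tendsto).comp hzconv'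
          rw [hcz0] at hcoord
          exact (tendsto_nhds_unique hcoord tendsto_const_nhds)
        have hz_eq : ∀ i ∈ S, Y i - ∑ j, C i j * z j = 0 := by
          intro i hi
          have hxi : 0 < x i :=
            (hx i).1.lt_of_ne (Ne.symm ((Finset.mem_filter.1 hi).2))
          have hid : ∀ l, Y i - ∑ j, C i j * cesaro Y C s x (μ l) j
              = (Real.log (orb (μ l) i) - Real.log (x i)) / (μ l) :=
            fun l => cesaro_log i hxi (hμpos l)
          have hρle : ∀ l, ρ ≤ orb (μ l) i := fun l => hφ (φ₂ l + 1) i hi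
          have hn' : ∀ l, (0:ℝ) < (μ l : ℝ) := fun l => Nat.cast_pos.2 (hμpos l)
          have hlow : ∀ l, (Real.log ρ - Real.log (x i)) / (μ l : ℝ)
              ≤ Y i - ∑ j, C i j * cesaro Y C s x (μ l) j := by
            intro l
            rw [hid l]
            gcongr
            exact hρle l
          have hupp : ∀ l, Y i - ∑ j, C i j * cesaro Y C s x (μ l) j
              ≤ (Real.log (Kc Y C s i) - Real.log (x i)) / (μ l : ℝ) := by
            intro l
            rw [hid l]
            gcongr
            · exact horb_pos i hi (μ l)
            · exact (horb_cube (μ l) i).2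
          have h0low : Filter.Tendsto (fun l => (Real.log ρ - Real.log (x i)) / (μ l : ℝ))
              Filter.atTop (nhds 0) :=
            Filter.Tendsto.div_atTop tendsto_const_nhds hμtend
          have h0upp : Filter.Tendsto
              (fun l => (Real.log (Kc Y C s i) - Real.log (x i)) / (μ l : ℝ))
              Filter.atTop (nhds 0) :=
            Filter.Tendsto.div_atTop tendsto_const_nhds hμtend
          have hmid : Filter.Tendsto (fun l => Y i - ∑ j, C i j * cesaro Y C s x (μ l) j)
              Filter.atTop (nhds 0) :=
            tendsto_of_tendsto_of_tendsto_of_le_of_le h0low h0upp hlow hupp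
          have hlin : Continuous (fun w : Fin m → ℝ => Y i - ∑ j, C i j * w j) :=
            continuous_const.sub (continuous_finset_sum _
              (fun j _ => continuous_const.mul (continuous_apply j)))
          have hmid2 : Filter.Tendsto (fun l => Y i - ∑ j, C i j * cesaro Y C s x (μ l) j)
              Filter.atTop (nhds (Y i - ∑ j, C i j * z j)) :=
            hlin.continuousAt.tendsto.comp hzconv'
          exact tendsto_nhds_unique hmid2 hmid
        have hGlin_le : Glin Y C p z ≤ 0 := by
          have hseq : ∀ l, Glin Y C p (cesaro Y C s x (μ l)) ≤ 0 := by
            intro l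
            rw [Glin_cesaro (hμpos l)]
            exact div_nonpos_of_nonpos_of_nonneg (hcon' (μ l) (hμpos l)) (Nat.cast_nonneg _)
          have h1 : Filter.Tendsto (fun l => Glin Y C p (cesaro Y C s x (μ l)))
              Filter.atTop (nhds (Glin Y C p z)) :=
            (continuous_Glin Y C p).continuousAt.tendsto.comp hzconv'
          exact le_of_tendsto h1 (Filter.Eventually.of_forall hseq)
        have hz_nonneg : ∀ i, 0 ≤ z i := fun i => hz_mem.1 i
        have hz_fixed : ∀ i, z i * Real.exp (Y i - ∑ j, C i j * z j) = z i := by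
          intro i
          by_cases hiS : i ∈ S
          · rw [hz_eq i hiS, Real.exp_zero, mul_one]
          · rw [hz_zero i hiS, zero_mul]
        have hz_prod : (∏ i, z i) = 0 :=
          Finset.prod_eq_zero (Finset.mem_univ i₀) (hz_zero i₀ hi₀S)
        have hposz := hfix z hz_nonneg hz_fixed hz_prod
        have hposz' : (0:ℝ) < Glin Y C p z := hposz
        linarith
      · rw [Filter.not_frequently] at hfreq
        have hev : ∀ᶠ t in Filter.atTop, ∃ i ∈ S, orb t i < ρ := by
          filter_upwards [hfreq] with t ht
          push_neg at ht
          exact ht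
        obtain ⟨T₀, hT₀⟩ := Filter.eventually_atTop.1 hev
        apply no_chain (fun j => Sn Y C s p (onev m) (T₀ + j) x) 0 ε hε
        · intro j
          rcases Nat.eq_zero_or_pos (T₀ + j) with h0 | hpos'
          · rw [h0]; simp [Sn]
          · exact hcon' _ hpos'
        · intro j
          obtain ⟨i, hiS, hilt⟩ := hT₀ (T₀ + j) (by omega)
          have hiSc : i ∉ Sᶜ := by simp [hiS]
          have hScard : S.card ≤ m := by simpa using Finset.card_le_univ S
          have hT'c : m + 1 ≤ (insert i Sᶜ).card + (k + 1) := by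
            rw [Finset.card_insert_of_notMem hiSc, Finset.card_compl, Fintype.card_fin]
            omega
          have hT'z : ∀ i' ∈ insert i Sᶜ, orb (T₀ + j) i' < ρ := by
            intro i' hi'
            rcases Finset.mem_insert.1 hi' with rfl | hmem
            · exact hilt
            · rw [horb_zero i' (Finset.mem_compl.1 hmem) _]; exact hρ
          obtain ⟨n, hn1, hnN, hnε⟩ := hV (orb (T₀ + j)) (horb_cube _) ⟨_, hT'c, hT'z⟩
          refine ⟨n, hn1, ?_⟩
          show Sn Y C s p (onev m) (T₀ + j) x + ε ≤ Sn Y C s p (onev m) (T₀ + (j + n)) x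
          have hgoal : Sn Y C s p (onev m) (T₀ + (j + n)) x
              = Sn Y C s p (onev m) (T₀ + j) x + Sn Y C s p (onev m) n (orb (T₀ + j)) := by
            rw [show T₀ + (j + n) = (T₀ + j) + n by omega]
            exact Sn_cocycle _ _ _ _
          rw [hgoal]
          linarith

end LemmaA

section Transfer

variable {m : ℕ} {Y : Fin m → ℝ} {C : Matrix (Fin m) (Fin m) ℝ} {s p : Fin m → ℝ}
variable (hC : ∀ i j, 0 < C i j) (hs : ∀ i, 0 ≤ s i ∧ s i < 1)

include hC hs in
lemma Vfinal (hfix : ∀ x : Fin m → ℝ, (∀ i, 0 ≤ x i) →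
      (∀ i, x i * Real.exp (Y i - ∑ j, C i j * x j) = x i) →
      (∏ i, x i) = 0 →
      0 < ∑ i, p i * (Y i - ∑ j, C i j * x j)) :
    ∃ ρ : ℝ, 0 < ρ ∧ ∃ N : ℕ, ∃ ε : ℝ, 0 < ε ∧
      ∀ y : Fin m → ℝ, InCube Y C s y → (∃ i, y i < ρ) →
        ∃ n, 1 ≤ n ∧ n ≤ N ∧ ε ≤ Sn Y C s p (onev m) n y := by
  obtain ⟨ρ, hρ, N, ε, hε, hV⟩ := Vprime m (by
    rintro y hy ⟨T, hTc, hTz⟩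
    apply lemmaA hC hs hfix y hy
    have hTne : T.Nonempty := Finset.card_pos.1 (by omega)
    obtain ⟨i, hi⟩ := hTne
    exact Finset.prod_eq_zero (Finset.mem_univ i) (hTz i hi))
  refine ⟨ρ, hρ, N, ε, hε, ?_⟩
  rintro y hy ⟨i, hiρ⟩
  refine hV y hy ⟨{i}, ?_, ?_⟩
  · rw [Finset.card_singleton]; omega
  · intro i' hi'
    rw [Finset.mem_singleton] at hi'
    subst hi'
    exact hiρ

include hC hs in
set_option maxHeartbeats 1000000 in
lemma transfer (hfix : ∀ x : Fin m → ℝ, (∀ i, 0 ≤ x i) →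
      (∀ i, x i * Real.exp (Y i - ∑ j, C i j * x j) = x i) →
      (∏ i, x i) = 0 →
      0 < ∑ i, p i * (Y i - ∑ j, C i j * x j)) :
    ∃ gt : ℝ, 1/2 ≤ gt ∧ gt < 1 ∧ ∃ δ : ℝ, 0 < δ ∧ ∃ N : ℕ, ∃ ε : ℝ, 0 < ε ∧
      ∀ g : Fin m → ℝ, (∀ i, gt < g i ∧ g i < 1) →
        ∀ y, InCube Y C s y → (∃ i, y i < δ) →
          ∃ n, 1 ≤ n ∧ n ≤ N ∧ ε ≤ Sn Y C s p g n y := by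
  obtain ⟨ρ, hρ, N, ε, hε, hV⟩ := Vfinal hC hs hfix
  suffices H : ∃ q : ℕ, ∀ g : Fin m → ℝ,
      (∀ i, 1 - 1/((q:ℝ)+2) < g i ∧ g i < 1) →
      ∀ y, InCube Y C s y → (∃ i, y i < ρ/2) →
        ∃ n, 1 ≤ n ∧ n ≤ N ∧ ε/2 ≤ Sn Y C s p g n y by
    obtain ⟨q, hq⟩ := H
    refine ⟨1 - 1/((q:ℝ)+2), ?_, ?_, ρ/2, by positivity, N, ε/2, by positivity, hq⟩
    · have h2 : (2:ℝ) ≤ (q:ℝ)+2 := by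
        have := Nat.cast_nonneg (α := ℝ) q; linarith
      have h3 : 1/((q:ℝ)+2) ≤ 1/2 := one_div_le_one_div_of_le two_pos h2
      linarith
    · have : (0:ℝ) < 1/((q:ℝ)+2) := by positivity
      linarith
  by_contra hcon
  push_neg at hcon
  have H : ∀ q : ℕ, ∃ g : Fin m → ℝ, (∀ i, 1 - 1/((q:ℝ)+2) < g i ∧ g i < 1) ∧
      ∃ y, InCube Y C s y ∧ (∃ i, y i < ρ/2) ∧
        ∀ n, 1 ≤ n → n ≤ N → Sn Y C s p g n y < ε/2 := by
    intro q
    obtain ⟨g, hg, y, hy1, hy2, hy3⟩ := hcon q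
    exact ⟨g, hg, y, hy1, hy2, fun n h1 h2 => by have := hy3 n h1 h2; linarith⟩
  choose gf hgf yf hyf1 hyf2 hyf3 using H
  choose idx hidx using hyf2
  obtain ⟨istar, hifreq⟩ := exists_freq_eq idx
  obtain ⟨φ₁, hφ₁mono, hφ₁⟩ := Filter.extraction_of_frequently_atTop hifreq
  have hmem : ∀ j, (fun l => yf (φ₁ l)) j ∈ Set.Icc (0 : Fin m → ℝ) (Kc Y C s) :=
    fun j => (InCube_iff_Icc _).1 (hyf1 (φ₁ j))
  obtain ⟨ystar, hystar_mem, φ₂, hφ₂mono, hyconv⟩ := (isCompact_Icc).tendsto_subseq hmem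
  set ψ : ℕ → ℕ := φ₁ ∘ φ₂ with hψ
  have hψmono : StrictMono ψ := hφ₁mono.comp hφ₂mono
  have hystar_cube : InCube Y C s ystar := (InCube_iff_Icc _).2 hystar_mem
  have hyconv' : Filter.Tendsto (fun l => yf (ψ l)) Filter.atTop (nhds ystar) := hyconv
  -- the distinguished coordinate stays below ρ
  have hystar_small : ystar istar < ρ := by
    have hcoord : Filter.Tendsto (fun l => yf (ψ l) istar) Filter.atTop (nhds (ystar istar)) :=
      (continuous_apply istar).continuousAt.tendsto.comp hyconv'
    have hub : ∀ l, yf (ψ l) istar ≤ ρ/2 := by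
      intro l
      have hieq : idx (ψ l) = istar := hφ₁ (φ₂ l)
      have := hidx (ψ l)
      rw [hieq] at this
      exact this.le
    have := le_of_tendsto hcoord (Filter.Eventually.of_forall hub)
    linarith
  -- g converges to the all-ones vector
  have hgconv : Filter.Tendsto (fun l => gf (ψ l)) Filter.atTop (nhds (onev m)) := by
    rw [tendsto_pi_nhds]
    intro i
    have hψtend : Filter.Tendsto (fun l => ((ψ l : ℝ) + 2)) Filter.atTop Filter.atTop :=
      Filter.tendsto_atTop_add_const_right _ 2
        (tendsto_natCast_atTop_atTop.comp hψmono.tendsto_atTop)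
    have hlowtend : Filter.Tendsto (fun l => 1 - 1/((ψ l : ℝ)+2)) Filter.atTop (nhds 1) := by
      have h0 : Filter.Tendsto (fun l => 1/((ψ l : ℝ)+2)) Filter.atTop (nhds 0) :=
        Filter.Tendsto.div_atTop tendsto_const_nhds hψtend
      have := Filter.Tendsto.sub (tendsto_const_nhds (x := (1:ℝ))) h0
      simpa using this
    have hlb : ∀ l, 1 - 1/((ψ l : ℝ)+2) ≤ gf (ψ l) i := fun l => (hgf (ψ l) i).1.le
    have hub : ∀ l, gf (ψ l) i ≤ 1 := fun l => (hgf (ψ l) i).2.le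
    have : Filter.Tendsto (fun l => gf (ψ l) i) Filter.atTop (nhds 1) :=
      tendsto_of_tendsto_of_tendsto_of_le_of_le hlowtend tendsto_const_nhds hlb hub
    exact this
  obtain ⟨n₀, hn₀1, hn₀N, hn₀ε⟩ := hV ystar hystar_cube ⟨istar, hystar_small⟩
  have hCA := continuousAt_Snx_one Y C s p n₀ ystar
  have hprod_tendsto : Filter.Tendsto (fun l => (gf (ψ l), yf (ψ l)))
      Filter.atTop (nhds ((onev m : Fin m → ℝ), ystar)) :=
    Filter.Tendsto.prodMk_nhds hgconv hyconv'
  have hSn_tendsto : Filter.Tendsto (fun l => Sn Y C s p (gf (ψ l)) n₀ (yf (ψ l)))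
      Filter.atTop (nhds (Sn Y C s p (onev m) n₀ ystar)) := by
    have h := hCA.tendsto.comp hprod_tendsto
    have he : (Snx Y C s p n₀ ∘ fun l => (gf (ψ l), yf (ψ l)))
        = fun l => Sn Y C s p (gf (ψ l)) n₀ (yf (ψ l)) := by
      funext l; exact Snx_eq Y C s p n₀ (gf (ψ l)) (yf (ψ l))
    rw [he] at h
    rwa [Snx_eq] at h
  have hub2 : ∀ l, Sn Y C s p (gf (ψ l)) n₀ (yf (ψ l)) ≤ ε/2 :=
    fun l => (hyf3 (ψ l) n₀ hn₀1 hn₀N).le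
  have hfin : Sn Y C s p (onev m) n₀ ystar ≤ ε/2 :=
    le_of_tendsto hSn_tendsto (Filter.Eventually.of_forall hub2)
  linarith

end Transfer

section Final

variable {m : ℕ} {Y : Fin m → ℝ} {C : Matrix (Fin m) (Fin m) ℝ} {s p : Fin m → ℝ}
variable (hC : ∀ i j, 0 < C i j) (hs : ∀ i, 0 ≤ s i ∧ s i < 1)

include hC hs in
lemma ratio_lb {g x : Fin m → ℝ} (hg2 : ∀ i, 1/2 ≤ g i ∧ g i ≤ 1)
    (hx : InCube Y C s x) (i : Fin m) :
    Real.exp (Y i - ∑ j, C i j * Kc Y C s j) / 2 ≤ ratio Y C s g x i := by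
  have hsum : ∑ j, C i j * (g j * x j) ≤ ∑ j, C i j * Kc Y C s j := by
    apply Finset.sum_le_sum
    intro j _
    apply mul_le_mul_of_nonneg_left _ (hC i j).le
    calc g j * x j ≤ 1 * x j :=
          mul_le_mul_of_nonneg_right (hg2 j).2 (hx j).1
      _ = x j := one_mul _
      _ ≤ Kc Y C s j := (hx j).2
  have h1 : Real.exp (Y i - ∑ j, C i j * Kc Y C s j)
      ≤ Real.exp (Y i - ∑ j, C i j * (g j * x j)) :=
    Real.exp_le_exp.2 (by linarith)
  have h2 : Real.exp (Y i - ∑ j, C i j * Kc Y C s j) / 2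
      ≤ g i * Real.exp (Y i - ∑ j, C i j * (g j * x j)) := by
    have hgi : 1/2 ≤ g i := (hg2 i).1
    have he : 0 < Real.exp (Y i - ∑ j, C i j * (g j * x j)) := Real.exp_pos _
    calc Real.exp (Y i - ∑ j, C i j * Kc Y C s j) / 2
        ≤ Real.exp (Y i - ∑ j, C i j * (g j * x j)) / 2 := by linarith
      _ = (1/2) * Real.exp (Y i - ∑ j, C i j * (g j * x j)) := by ring
      _ ≤ g i * Real.exp (Y i - ∑ j, C i j * (g j * x j)) :=
          mul_le_mul_of_nonneg_right hgi he.le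
  have h3 : 0 ≤ (1 - g i) * s i := by
    have := (hg2 i).2; have := (hs i).1; nlinarith
  simp only [ratio]
  linarith

include hC hs in
lemma Gf_lb (hp : ∀ i, 0 < p i) {g x : Fin m → ℝ} (hg2 : ∀ i, 1/2 ≤ g i ∧ g i ≤ 1)
    (hx : InCube Y C s x) :
    -(∑ i, p i * |Real.log (Real.exp (Y i - ∑ j, C i j * Kc Y C s j) / 2)|)
      ≤ Gf Y C s p g x := by
  rw [← Finset.sum_neg_distrib]
  apply Finset.sum_le_sum
  intro i _
  rw [← mul_neg]
  apply mul_le_mul_of_nonneg_left _ (hp i).le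
  have hlb : Real.exp (Y i - ∑ j, C i j * Kc Y C s j) / 2 ≤ ratio Y C s g x i :=
    ratio_lb hC hs hg2 hx i
  have hlbpos : 0 < Real.exp (Y i - ∑ j, C i j * Kc Y C s j) / 2 := by positivity
  calc -|Real.log (Real.exp (Y i - ∑ j, C i j * Kc Y C s j) / 2)|
      ≤ Real.log (Real.exp (Y i - ∑ j, C i j * Kc Y C s j) / 2) := neg_abs_le _
    _ ≤ Real.log (ratio Y C s g x i) := Real.log_le_log hlbpos hlb

include hC hs in
lemma iter_bound {g x : Fin m → ℝ} (hg : ∀ i, 0 < g i ∧ g i ≤ 1)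
    (hx : ∀ i, 0 < x i) (t : ℕ) (i : Fin m) :
    (APmap Y C s g)^[t] x i
      ≤ Real.exp (Y i - 1) / (C i i * (1 - s i)) + s i ^ t * x i := by
  have hKK : 0 ≤ Real.exp (Y i - 1) / (C i i * (1 - s i)) := by
    have h1 : 0 < C i i * (1 - s i) :=
      mul_pos (hC i i) (by have := (hs i).2; linarith)
    positivity
  induction t with
  | zero => simpa using hKK
  | succ t ih =>
      rw [Function.iterate_succ_apply']
      have hnn : ∀ j, 0 ≤ (APmap Y C s g)^[t] x j :=
        fun j => (pos_iter hC hs hg hx t j).le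
      have hup := APmap_upper (Y := Y) hC hs (fun j => ⟨(hg j).1.le, (hg j).2⟩) hnn i
      have hsle : s i * ((APmap Y C s g)^[t] x i)
          ≤ s i * (Real.exp (Y i - 1) / (C i i * (1 - s i)) + s i ^ t * x i) :=
        mul_le_mul_of_nonneg_left ih (hs i).1
      have halg : Real.exp (Y i - 1) / C i i
          + s i * (Real.exp (Y i - 1) / (C i i * (1 - s i)))
          = Real.exp (Y i - 1) / (C i i * (1 - s i)) := by
        have h1 : (0:ℝ) < C i i := hC i i
        have h2 : (0:ℝ) < 1 - s i := by have := (hs i).2; linarith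
        field_simp
        ring
      have : s i ^ (t + 1) * x i = s i * (s i ^ t * x i) := by ring
      rw [this]
      linarith

end Final

/-- Corollary of Theorem 4: if positive weights witness the
permanence condition at every boundary equilibrium of the associated
Lotka–Volterra system `x ↦ x ∘ exp(Y − Cx)`, then the annual plant model is
permanent for all germination fractions sufficiently close to 1. -/
theorem annual_plant_permanent {m : ℕ} (Y : Fin m → ℝ)
    (C : Matrix (Fin m) (Fin m) ℝ) (s : Fin m → ℝ)
    (hY : ∀ i, 0 < Y i) (hC : ∀ i j, 0 < C i j)
    (hs : ∀ i, 0 ≤ s i ∧ s i < 1)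
    (p : Fin m → ℝ) (hp : ∀ i, 0 < p i)
    (hfix : ∀ x : Fin m → ℝ, (∀ i, 0 ≤ x i) →
      (∀ i, x i * Real.exp (Y i - ∑ j, C i j * x j) = x i) →
      (∏ i, x i) = 0 →
      0 < ∑ i, p i * (Y i - ∑ j, C i j * x j)) :
    ∃ gt : ℝ, 0 < gt ∧ gt < 1 ∧
      ∀ g : Fin m → ℝ, (∀ i, gt < g i ∧ g i < 1) →
        ∃ η > (0 : ℝ), ∀ x : Fin m → ℝ, (∀ i, 0 < x i) →
          ∃ T : ℕ, ∀ t ≥ T, ∀ i, η < (APmap Y C s g)^[t] x i := by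
  rcases Nat.eq_zero_or_pos m with hm | hm
  · subst hm
    exact ⟨1/2, by norm_num, by norm_num, fun g _ =>
      ⟨1, by norm_num, fun x _ => ⟨0, fun t _ i => i.elim0⟩⟩⟩
  haveI : Nonempty (Fin m) := ⟨⟨0, hm⟩⟩
  obtain ⟨gt, hgt1, hgt2, δ, hδ, N, ε, hε, hT⟩ := transfer hC hs hfix
  refine ⟨gt, by linarith, hgt2, ?_⟩
  intro g hg
  have hg' : ∀ i, 0 < g i ∧ g i ≤ 1 :=
    fun i => ⟨by have := (hg i).1; linarith, (hg i).2.le⟩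
  have hg2 : ∀ i, 1/2 ≤ g i ∧ g i ≤ 1 :=
    fun i => ⟨by have := (hg i).1; linarith, (hg i).2.le⟩
  -- constants
  set δ' : ℝ := min δ (1/2) with hδ'def
  have hδ'pos : 0 < δ' := lt_min hδ (by norm_num)
  have hδ'le : δ' ≤ δ := min_le_left _ _
  have hδ'half : δ' ≤ 1/2 := min_le_right _ _
  set A : ℝ := ∑ i, p i * Real.log δ' with hAdef
  set M₀ : ℝ := ∑ i, p i * |Real.log (Real.exp (Y i - ∑ j, C i j * Kc Y C s j) / 2)|
    with hM₀def
  have hM₀ : 0 ≤ M₀ :=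
    Finset.sum_nonneg fun i _ => mul_nonneg (hp i).le (abs_nonneg _)
  set Vmax : ℝ := ∑ i, p i * Real.log (Kc Y C s i) with hVmaxdef
  have hKclog : ∀ i, 0 ≤ Real.log (Kc Y C s i) :=
    fun i => Real.log_nonneg (Kc_ge_one hC hs i)
  have hVmax0 : 0 ≤ Vmax :=
    Finset.sum_nonneg fun i _ => mul_nonneg (hp i).le (hKclog i)
  have hA0 : A ≤ 0 := by
    apply Finset.sum_nonpos
    intro i _
    exact mul_nonpos_iff.2 (Or.inl ⟨(hp i).le,
      Real.log_nonpos hδ'pos.le (by linarith)⟩)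
  set Nm : ℕ := max N 1 with hNmdef
  set pmin : ℝ := Finset.univ.inf' Finset.univ_nonempty p with hpmindef
  have hpmin_pos : 0 < pmin := by
    rw [hpmindef, Finset.lt_inf'_iff]
    exact fun i _ => hp i
  have hpmin_le : ∀ i, pmin ≤ p i := fun i => Finset.inf'_le p (Finset.mem_univ i)
  set cc : ℝ := A - Nm * M₀ - Vmax with hccdef
  have hcc0 : cc ≤ 0 := by
    have h1 : 0 ≤ (Nm:ℝ) * M₀ := mul_nonneg (Nat.cast_nonneg _) hM₀
    rw [hccdef]; linarith
  set η : ℝ := Real.exp (cc / pmin) / 2 with hηdef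
  refine ⟨η, by positivity, ?_⟩
  intro x hx
  -- entry time into the absorbing cube
  have hsd : ∀ i : Fin m, ∃ Ti : ℕ, ∀ t, Ti ≤ t → s i ^ t * x i ≤ 1 := by
    intro i
    have htend : Filter.Tendsto (fun t : ℕ => s i ^ t * x i) Filter.atTop (nhds 0) := by
      have h0 := tendsto_pow_atTop_nhds_zero_of_lt_one (hs i).1 (hs i).2
      have h1 := h0.mul_const (x i)
      simpa using h1
    have hev := htend.eventually_le_const (v := (0:ℝ)) (u := (1:ℝ)) one_pos
    obtain ⟨Ti, hTi⟩ := Filter.eventually_atTop.1 hev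
    exact ⟨Ti, hTi⟩
  choose Ti hTi using hsd
  set T₀ : ℕ := Finset.univ.sup Ti with hT₀def
  have hcube : ∀ t, T₀ ≤ t → InCube Y C s ((APmap Y C s g)^[t] x) := by
    intro t ht i
    refine ⟨(pos_iter hC hs hg' hx t i).le, ?_⟩
    have h1 := iter_bound (Y := Y) hC hs hg' hx t i
    have h2 : s i ^ t * x i ≤ 1 :=
      hTi i t (le_trans (Finset.le_sup (Finset.mem_univ i)) ht)
    simp only [Kc]
    linarith
  set o : ℕ → Fin m → ℝ := fun t => (APmap Y C s g)^[t + T₀] x with ho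
  have hocube : ∀ t, InCube Y C s (o t) := fun t => hcube (t + T₀) (by omega)
  have hopos : ∀ t i, 0 < o t i := fun t i => pos_iter hC hs hg' hx (t + T₀) i
  have hoiter : ∀ t n : ℕ, o (t + n) = (APmap Y C s g)^[n] (o t) := by
    intro t n
    show (APmap Y C s g)^[t + n + T₀] x = _
    rw [show t + n + T₀ = n + (t + T₀) by omega, Function.iterate_add_apply]
  set v : ℕ → ℝ := fun t => Vf p (o t) with hv
  have h4 : ∀ t, v t ≤ Vmax := by
    intro t
    apply Finset.sum_le_sum
    intro i _
    exact mul_le_mul_of_nonneg_left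
      (Real.log_le_log (hopos t i) (hocube t i).2) (hp i).le
  have h1 : ∀ t, ¬ (∃ i, o t i < δ') → A ≤ v t := by
    intro t hnb
    push_neg at hnb
    apply Finset.sum_le_sum
    intro i _
    exact mul_le_mul_of_nonneg_left (Real.log_le_log hδ'pos (hnb i)) (hp i).le
  have h3 : ∀ t, v t - M₀ ≤ v (t + 1) := by
    intro t
    have ho1 : o (t + 1) = APmap Y C s g (o t) := by
      rw [hoiter t 1, Function.iterate_one]
    have hstep : v (t + 1) = v t + Gf Y C s p g (o t) := by
      show Vf p (o (t + 1)) = Vf p (o t) + _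
      rw [ho1]
      exact Vf_step hC hs hg' (fun j => hopos t j)
    have hGf : -M₀ ≤ Gf Y C s p g (o t) := Gf_lb hC hs hp hg2 (hocube t)
    rw [hstep]
    linarith
  have h2 : ∀ t, (∃ i, o t i < δ') → ∃ n, 1 ≤ n ∧ n ≤ Nm ∧ v t + ε ≤ v (t + n) := by
    rintro t ⟨i, hi⟩
    obtain ⟨n, hn1, hnN, hnε⟩ :=
      hT g hg (o t) (hocube t) ⟨i, lt_of_lt_of_le hi hδ'le⟩
    refine ⟨n, hn1, le_trans hnN (le_max_left _ _), ?_⟩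
    have htel := Vf_telescope (Y := Y) (p := p) hC hs hg' (fun j => hopos t j) n
    show v t + ε ≤ Vf p (o (t + n))
    rw [hoiter t n, htel]
    have : v t = Vf p (o t) := rfl
    linarith
  obtain ⟨T₁, hT₁⟩ := eventually_ge v (fun t => ∃ i, o t i < δ') A Vmax ε M₀ Nm
    (le_max_right _ _) hε hM₀ h1 h2 h3 h4
  refine ⟨T₀ + T₁, ?_⟩
  intro t ht i
  have hu : T₁ ≤ t - T₀ := by omega
  have hvu := hT₁ (t - T₀) hu
  have hot : (APmap Y C s g)^[t] x = o (t - T₀) := by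
    show _ = (APmap Y C s g)^[t - T₀ + T₀] x
    rw [show t - T₀ + T₀ = t by omega]
  rw [hot]
  set u : ℕ := t - T₀ with hu'
  have hsplit : v u = p i * Real.log (o u i)
      + ∑ j ∈ Finset.univ.erase i, p j * Real.log (o u j) := by
    show Vf p (o u) = _
    rw [Vf, ← Finset.add_sum_erase _ _ (Finset.mem_univ i)]
  have herase : ∑ j ∈ Finset.univ.erase i, p j * Real.log (o u j) ≤ Vmax := by
    calc ∑ j ∈ Finset.univ.erase i, p j * Real.log (o u j)
        ≤ ∑ j ∈ Finset.univ.erase i, p j * Real.log (Kc Y C s j) :=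
          Finset.sum_le_sum (fun j _ => mul_le_mul_of_nonneg_left
            (Real.log_le_log (hopos u j) (hocube u j).2) (hp j).le)
      _ ≤ Vmax :=
          Finset.sum_le_sum_of_subset_of_nonneg (Finset.erase_subset _ _)
            (fun j _ _ => mul_nonneg (hp j).le (hKclog j))
  have hpil : cc ≤ p i * Real.log (o u i) := by
    rw [hccdef]
    linarith
  have hlog : cc / p i ≤ Real.log (o u i) := by
    rw [div_le_iff₀ (hp i)]
    linarith
  have hdiv : cc / pmin ≤ cc / p i := by
    rw [div_le_div_iff₀ hpmin_pos (hp i)]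
    exact mul_le_mul_of_nonpos_left (hpmin_le i) hcc0
  have hexp : Real.exp (cc / pmin) ≤ o u i := by
    calc Real.exp (cc / pmin) ≤ Real.exp (Real.log (o u i)) :=
          Real.exp_le_exp.2 (le_trans hdiv hlog)
      _ = o u i := Real.exp_log (hopos u i)
  have hηlt : η < Real.exp (cc / pmin) := by
    rw [hηdef]
    have := Real.exp_pos (cc / pmin)
    linarith
  linarith

end AnnualPlant
end
end

section
/- Consider the two-species Lotka–Volterra metacommunity model on ℝ^{2k}_+: X^i_{t+1} = X^i_t diag{f^i_1(X_t),…,f^i_k(X_t)} D^i for i = 1,2, where f^i_j(x) = exp(−Σ_{h=1}^2 B^j_{ih} x^{hj} + c^j_i), each B^j is a 2×2 matrix with positive entries, each c^j is a positive 2-vector, and each D^i is a primitive column-stochastic k×k matrix. For every ε > 0 there exists δ_0 ∈ (0,1) such that if d^i_{jj} ∈ (δ_0, 1] for all i ∈ {1,2} and all j ∈ {1,…,k}, then r_2(μ) ≥ max_j (c^j_2 − B^j_{21} c^j_1 / B^j_{11}) − ε for every invariant Borel probability measure μ of the model supported by S^1_0 = {x ∈ ℝ^{2k}_+ : ‖x^2‖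 = 0} (species 1 alone present). -/
open MeasureTheory Filter Topology

noncomputable section

namespace RPAux
open Filter MeasureTheory RP

lemma mul_exp_le (b x cc : ℝ) (hb : 0 < b) (hx : 0 ≤ x) :
    x * Real.exp (cc - b * x) ≤ Real.exp (cc - 1) / b := by
  have h1 : b * x * Real.exp (-(b * x)) ≤ Real.exp (-1 : ℝ) := by
    have h2 : b * x ≤ Real.exp (b * x - 1) := by
      have := Real.add_one_le_exp (b * x - 1); linarith
    calc b * x * Real.exp (-(b*x)) ≤ Real.exp (b*x - 1) * Real.exp (-(b*x)) := by
          apply mul_le_mul_of_nonneg_right h2 (Real.exp_nonneg _)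
      _ = Real.exp (-1 : ℝ) := by rw [← Real.exp_add]; ring_nf
  have key : x * Real.exp (cc - b * x) = (b * x * Real.exp (-(b*x))) * Real.exp cc / b := by
    rw [show cc - b*x = -(b*x) + cc by ring, Real.exp_add]
    field_simp
    try ring
  rw [key, show Real.exp (cc - 1) / b = Real.exp (-1 : ℝ) * Real.exp cc / b by
    rw [← Real.exp_add]; ring_nf]
  gcongr

lemma key_ineq (cc bb C ρ s η v : ℝ) (hbb : 0 < bb) (hcc : 0 < cc) (hρ : 0 < ρ)
    (hv0 : 0 ≤ v) (hvC : v ≤ C) (hcb : cc ≤ bb * C)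
    (hs : 0 < s) (hη : 0 ≤ η)
    (hη1 : η ≤ s * Real.exp (cc - bb * C) * (Real.exp ρ - 1))
    (hsη : s + η ≤ (cc / bb) * Real.exp (cc - bb * C) * (Real.exp ρ - 1)) :
    v * Real.exp (cc - bb * v) + η + s ≤ (v + s) * Real.exp (cc - bb * v) * Real.exp ρ := by
  set f := Real.exp (cc - bb * v) with hf
  set fm := Real.exp (cc - bb * C) with hfm
  have hfm_le_f : fm ≤ f := Real.exp_le_exp.mpr (by nlinarith [mul_le_mul_of_nonneg_left hvC hbb.le])
  have hfm1 : fm ≤ 1 := Real.exp_le_one_iff.mpr (by linarith)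
  have hfm0 : 0 < fm := Real.exp_pos _
  have hf0 : 0 < f := Real.exp_pos _
  have he1 : 1 < Real.exp ρ := by rw [← Real.exp_zero]; exact Real.exp_lt_exp.mpr hρ
  rcases le_or_gt 1 f with h1 | h1
  · have hA : v * f ≤ v * f * Real.exp ρ := by nlinarith [mul_nonneg hv0 hf0.le]
    have hB : fm * (Real.exp ρ - 1) ≤ f * Real.exp ρ - 1 := by
      nlinarith [mul_le_mul_of_nonneg_right hfm1 (by linarith : (0:ℝ) ≤ Real.exp ρ - 1)]
    have hC : s * (fm * (Real.exp ρ - 1)) ≤ s * (f * Real.exp ρ - 1) :=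
      mul_le_mul_of_nonneg_left hB hs.le
    nlinarith
  · have hv : cc / bb < v := by
      have h2 : cc - bb * v < 0 := Real.exp_lt_one_iff.mp h1
      rw [div_lt_iff₀ hbb]; linarith
    have hvf : (cc / bb) * fm ≤ v * f := by
      apply mul_le_mul hv.le hfm_le_f hfm0.le hv0
    have hD : (cc/bb) * fm * (Real.exp ρ - 1) ≤ v * f * (Real.exp ρ - 1) :=
      mul_le_mul_of_nonneg_right hvf (by linarith)
    have hE : 0 ≤ s * (f * Real.exp ρ) :=
      mul_nonneg hs.le (mul_nonneg hf0.le (Real.exp_pos _).le)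
    nlinarith

lemma mnorm_nonneg {a b : Type*} [Fintype a] [Fintype b] (M : Matrix a b ℝ) : 0 ≤ mnorm M :=
  Finset.sum_nonneg fun _ _ => Finset.sum_nonneg fun _ _ => abs_nonneg _

lemma abs_entry_le_mnorm {a b : Type*} [Fintype a] [Fintype b] (M : Matrix a b ℝ) (j : a) (l : b) :
    |M j l| ≤ mnorm M := by
  calc |M j l| ≤ ∑ l', |M j l'| :=
        Finset.single_le_sum (f := fun l' => |M j l'|) (fun _ _ => abs_nonneg _) (Finset.mem_univ l)
    _ ≤ mnorm M :=
        Finset.single_le_sum (f := fun j' => ∑ l', |M j' l'|)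
          (fun _ _ => Finset.sum_nonneg fun _ _ => abs_nonneg _) (Finset.mem_univ j)

lemma mnorm_mul_le {d : Type*} [Fintype d] (M N : Matrix d d ℝ) :
    mnorm (M * N) ≤ mnorm M * mnorm N := by
  unfold mnorm
  calc ∑ j, ∑ l, |(M * N) j l| ≤ ∑ j, ∑ l, ∑ a, |M j a| * |N a l| := by
        apply Finset.sum_le_sum; intro j _
        apply Finset.sum_le_sum; intro l _
        rw [Matrix.mul_apply]
        refine le_trans (Finset.abs_sum_le_sum_abs _ _) ?_
        apply Finset.sum_le_sum; intro a _
        rw [abs_mul]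
    _ = ∑ a, (∑ j, |M j a|) * (∑ l, |N a l|) := by
        have h1 : ∀ j, ∑ l, ∑ a, |M j a| * |N a l| = ∑ a, |M j a| * ∑ l, |N a l| := by
          intro j
          rw [Finset.sum_comm]
          exact Finset.sum_congr rfl fun a _ => (Finset.mul_sum _ _ _).symm
        simp_rw [h1]
        rw [Finset.sum_comm]
        exact Finset.sum_congr rfl fun a _ => (Finset.sum_mul _ _ _).symm
    _ ≤ ∑ a, (∑ j, |M j a|) * (∑ a', ∑ l, |N a' l|) := by
        apply Finset.sum_le_sum; intro a _
        apply mul_le_mul_of_nonneg_left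
        · exact Finset.single_le_sum (f := fun a' => ∑ l, |N a' l|)
            (fun _ _ => Finset.sum_nonneg fun _ _ => abs_nonneg _) (Finset.mem_univ a)
        · exact Finset.sum_nonneg fun _ _ => abs_nonneg _
    _ = (∑ j, ∑ a, |M j a|) * (∑ a', ∑ l, |N a' l|) := by
        rw [← Finset.sum_mul, Finset.sum_comm]

lemma map_iterate {X : Type*} [MeasurableSpace X] {f : X → X} (hf : Measurable f)
    {μ : Measure X} (h : μ.map f = μ) (s : ℕ) : μ.map (f^[s]) = μ := by
  induction s with
  | zero => simp
  | succ t ih =>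
      rw [Function.iterate_succ, ← Measure.map_map (hf.iterate t) hf, h, ih]

lemma integral_comp_iterate {X : Type*} [MeasurableSpace X] {f : X → X} (hf : Measurable f)
    {μ : Measure X} (h : μ.map f = μ) (s : ℕ) {g : X → ℝ} (hg : Measurable g) :
    ∫ x, g (f^[s] x) ∂μ = ∫ x, g x ∂μ := by
  conv_rhs => rw [← map_iterate hf h s]
  rw [integral_map (hf.iterate s).aemeasurable hg.aestronglyMeasurable]


lemma mnorm_one {d : ℕ} : mnorm (1 : Matrix (Fin d) (Fin d) ℝ) = d := by
  simp [mnorm, Matrix.one_apply, apply_ite abs]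

section coc
variable {m : ℕ} {n : Fin m → ℕ} (A : St m n → Blocks m n) (i : Fin m)

lemma coc_nonneg (hA : ∀ y j l, 0 ≤ A y i j l) (x : St m n) :
    ∀ t (j l : Fin (n i)), 0 ≤ coc A i x t j l := by
  intro t
  induction t with
  | zero =>
      intro j l
      simp only [coc, Matrix.one_apply]
      split <;> norm_num
  | succ t ih =>
      intro j l
      simp only [coc, Matrix.mul_apply]
      exact Finset.sum_nonneg fun a _ => mul_nonneg (ih j a) (hA _ a l)

lemma coc_diag (hA : ∀ y j l, 0 ≤ A y i j l) (x : St m n) (j : Fin (n i)) :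
    ∀ t, (∏ s ∈ Finset.range t, A ((Phi A)^[s] x) i j j) ≤ coc A i x t j j := by
  intro t
  induction t with
  | zero => simp [coc, Matrix.one_apply]
  | succ t ih =>
      rw [Finset.prod_range_succ]
      simp only [coc, Matrix.mul_apply]
      calc (∏ s ∈ Finset.range t, A ((Phi A)^[s] x) i j j) * A ((Phi A)^[t] x) i j j
          ≤ coc A i x t j j * A ((Phi A)^[t] x) i j j := by
            apply mul_le_mul_of_nonneg_right ih (hA _ j j)
        _ ≤ ∑ a, coc A i x t j a * A ((Phi A)^[t] x) i a j := by
            refine Finset.single_le_sum (f := fun a => coc A i x t j a * A ((Phi A)^[t] x) i a j)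
              (fun a _ => mul_nonneg (coc_nonneg A i hA x t j a) (hA _ a j)) (Finset.mem_univ j)

lemma mnorm_coc_le (x : St m n) (K : ℝ) (hK : 0 ≤ K)
    (hA : ∀ s, mnorm (A ((Phi A)^[s] x) i) ≤ K) :
    ∀ t, mnorm (coc A i x t) ≤ (n i : ℝ) * K ^ t := by
  intro t
  induction t with
  | zero => simp [coc, mnorm_one]
  | succ t ih =>
      calc mnorm (coc A i x (t + 1)) ≤ mnorm (coc A i x t) * mnorm (A ((Phi A)^[t] x) i) :=
            mnorm_mul_le _ _
        _ ≤ ((n i : ℝ) * K ^ t) * K := by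
            apply mul_le_mul ih (hA t) (mnorm_nonneg _)
            positivity
        _ = (n i : ℝ) * K ^ (t + 1) := by ring

end coc

lemma rev_fatou {X : Type*} [MeasurableSpace X] (μ : Measure X) [IsProbabilityMeasure μ]
    (f : ℕ → X → ℝ) (hf : ∀ t, Measurable (f t)) (m M I : ℝ)
    (hb : ∀ᵐ x ∂μ, ∀ t, f t x ∈ Set.Icc m M)
    (hI : ∀ t, ∫ x, f t x ∂μ = I) :
    I ≤ ∫ x, Filter.limsup (fun t => f t x) Filter.atTop ∂μ := by
  have hint : ∀ t, Integrable (f t) μ := by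
    intro t
    refine Integrable.mono' (integrable_const (max |m| |M|)) (hf t).aestronglyMeasurable ?_
    filter_upwards [hb] with x hx
    rw [Real.norm_eq_abs, abs_le]
    constructor
    · have : -|m| ≤ m := neg_abs_le m
      have := (hx t).1
      have : -|m| ≤ f t x := by linarith
      exact le_trans (by simp [neg_le_neg (le_max_left |m| |M|)]) this
    · exact le_trans (hx t).2 (le_trans (le_abs_self M) (le_max_right _ _))
  have hIM : I ≤ M := by
    rw [← hI 0]
    calc ∫ x, f 0 x ∂μ ≤ ∫ _x, M ∂μ := by
          refine integral_mono_ae (hint 0) (integrable_const M) ?_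
          filter_upwards [hb] with x hx using (hx 0).2
      _ = M := by simp
  set w : ℕ → X → ENNReal := fun t x => ENNReal.ofReal (M - f t x) with hw
  have hwmeas : ∀ t, Measurable (w t) := fun t =>
    (measurable_const.sub (hf t)).ennreal_ofReal
  have hlw : ∀ t, ∫⁻ x, w t x ∂μ = ENNReal.ofReal (M - I) := by
    intro t
    rw [← ofReal_integral_eq_lintegral_ofReal (f := fun x => M - f t x)
      ((integrable_const M).sub (hint t))
      (by filter_upwards [hb] with x hx using sub_nonneg.mpr (hx t).2)]
    congr 1
    rw [integral_sub (integrable_const M) (hint t), hI t]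
    simp
  have key : ∫⁻ x, atTop.liminf (fun t => w t x) ∂μ ≤ ENNReal.ofReal (M - I) := by
    refine le_trans (lintegral_liminf_le (μ := μ) hwmeas) ?_
    simp only [hlw]
    simp
  have hpt : ∀ᵐ x ∂μ, Filter.limsup (fun t => f t x) Filter.atTop
      = M - (atTop.liminf (fun t => w t x)).toReal := by
    filter_upwards [hb] with x hx
    have hbd : IsBoundedUnder (· ≤ ·) atTop (fun t => f t x) :=
      Filter.isBoundedUnder_of ⟨M, fun t => (hx t).2⟩
    have hcb : IsCoboundedUnder (· ≤ ·) atTop (fun t => f t x) :=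
      Filter.IsBoundedUnder.isCoboundedUnder_flip
        (Filter.isBoundedUnder_of ⟨m, fun t => (hx t).1⟩)
    have h1 : atTop.liminf (fun t => (w t x).toReal) = (atTop.liminf (fun t => w t x)).toReal :=
      ENNReal.liminf_toReal_eq (b := ENNReal.ofReal (M - m)) ENNReal.ofReal_ne_top
        (Filter.Eventually.of_forall fun t => ENNReal.ofReal_le_ofReal (by
          have := (hx t).1; linarith))
    have h2 : (fun t => (w t x).toReal) = fun t => M - f t x := by
      funext t
      rw [hw, ENNReal.toReal_ofReal (by have := (hx t).2; linarith)]
    rw [← h1, h2, liminf_const_sub atTop (fun t => f t x) M hbd hcb]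
    ring
  have hliminfw_meas : Measurable (fun x => atTop.liminf (fun t => w t x)) :=
    Measurable.liminf hwmeas
  have hfin : ∀ᵐ x ∂μ, atTop.liminf (fun t => w t x) < ⊤ := by
    filter_upwards [hb] with x hx
    have hble : ∀ t, w t x ≤ ENNReal.ofReal (M - m) := fun t =>
      ENNReal.ofReal_le_ofReal (by have := (hx t).1; linarith)
    exact lt_of_le_of_lt (liminf_le_of_frequently_le (Filter.Frequently.of_forall hble))
      ENNReal.ofReal_lt_top
  have hInt2 : ∫ x, (atTop.liminf (fun t => w t x)).toReal ∂μ
      = (∫⁻ x, atTop.liminf (fun t => w t x) ∂μ).toReal :=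
    integral_toReal hliminfw_meas.aemeasurable hfin
  have : ∫ x, Filter.limsup (fun t => f t x) Filter.atTop ∂μ
      = M - (∫⁻ x, atTop.liminf (fun t => w t x) ∂μ).toReal := by
    rw [integral_congr_ae hpt, ← hInt2, integral_sub (integrable_const M)]
    · simp
    · refine Integrable.mono' (integrable_const (M - m)) ?_ ?_
      · exact (hliminfw_meas.ennreal_toReal).aestronglyMeasurable
      · filter_upwards [hb] with x hx
        rw [Real.norm_eq_abs, abs_of_nonneg ENNReal.toReal_nonneg]
        have hble : ∀ t, w t x ≤ ENNReal.ofReal (M - m) := fun t =>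
          ENNReal.ofReal_le_ofReal (by have := (hx t).1; linarith)
        have : atTop.liminf (fun t => w t x) ≤ ENNReal.ofReal (M - m) :=
          liminf_le_of_frequently_le (Filter.Frequently.of_forall hble)
        calc (atTop.liminf (fun t => w t x)).toReal
            ≤ (ENNReal.ofReal (M - m)).toReal := ENNReal.toReal_mono ENNReal.ofReal_ne_top this
          _ ≤ M - m := by
              rw [ENNReal.toReal_ofReal']
              exact max_le le_rfl (by have h1 := (hx 0).1; have h2 := (hx 0).2; linarith)
  rw [this]
  have : (∫⁻ x, atTop.liminf (fun t => w t x) ∂μ).toReal ≤ M - I := by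
    calc (∫⁻ x, atTop.liminf (fun t => w t x) ∂μ).toReal
        ≤ (ENNReal.ofReal (M - I)).toReal := ENNReal.toReal_mono ENNReal.ofReal_ne_top key
      _ ≤ M - I := by rw [ENNReal.toReal_ofReal']; exact max_le le_rfl (by linarith)
  linarith




end RPAux

namespace RP

/-- The two-species Lotka–Volterra metacommunity model on `k` patches:
`A_i(x) = diag{f^i_1(x),…,f^i_k(x)} Dⁱ` with
`f^i_j(x) = exp(−∑_h B^j_{ih} x^{hj} + c^j_i)`. -/
def MetaA {k : ℕ} (B : Fin k → Matrix (Fin 2) (Fin 2) ℝ)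
    (c : Fin k → Fin 2 → ℝ) (D : Fin 2 → Matrix (Fin k) (Fin k) ℝ) :
    St 2 (fun _ => k) → Blocks 2 (fun _ => k) :=
  fun x i => Matrix.of fun j l =>
    Real.exp (-(∑ h : Fin 2, B j i h * x h j) + c j i) * D i j l


section model
open RPAux
variable {k : ℕ} (B : Fin k → Matrix (Fin 2) (Fin 2) ℝ) (c : Fin k → Fin 2 → ℝ)
  (D : Fin 2 → Matrix (Fin k) (Fin k) ℝ)

lemma metaA_apply (x : St 2 (fun _ => k)) (i : Fin 2) (j l : Fin k) :
    MetaA B c D x i j l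
      = Real.exp (-(B j i 0 * x 0 j + B j i 1 * x 1 j) + c j i) * D i j l := by
  simp [MetaA, Fin.sum_univ_two]

lemma phi_apply (x : St 2 (fun _ => k)) (i : Fin 2) (j : Fin k) :
    Phi (MetaA B c D) x i j
      = ∑ l, x i l * (Real.exp (-(B l i 0 * x 0 l + B l i 1 * x 1 l) + c l i) * D i l j) := by
  simp [Phi, Matrix.vecMul, dotProduct, MetaA, Fin.sum_univ_two]

lemma cont_metaA_entry (i : Fin 2) (j l : Fin k) :
    Continuous fun x : St 2 (fun _ => k) => MetaA B c D x i j l := by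
  simp only [metaA_apply]
  fun_prop

lemma cont_phi : Continuous (Phi (MetaA B c D)) := by
  apply continuous_pi; intro i; apply continuous_pi; intro j
  have h : (fun x => Phi (MetaA B c D) x i j)
      = fun x => ∑ l, x i l * MetaA B c D x i l j := by
    funext x; simp [Phi, Matrix.vecMul, dotProduct]
  rw [h]
  exact continuous_finset_sum _ fun l _ =>
    (Continuous.mul (by fun_prop) (cont_metaA_entry B c D i l j))

lemma cont_coc (i : Fin 2) (t : ℕ) (j l : Fin k) :
    Continuous fun x : St 2 (fun _ => k) => coc (MetaA B c D) i x t j l := by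
  induction t generalizing j l with
  | zero => simp only [coc]; exact continuous_const
  | succ t ih =>
      simp only [coc, Matrix.mul_apply]
      exact continuous_finset_sum _ fun a _ =>
        (ih j a).mul ((cont_metaA_entry B c D i a l).comp ((cont_phi B c D).iterate t))

/-- The compact absorbing region for species 1, with species 2 extinct. -/
def SS (k : ℕ) (C : ℝ) : Set (St 2 (fun _ => k)) :=
  {x | (∀ i j, 0 ≤ x i j) ∧ (∀ j, x 1 j = 0) ∧ ∀ j, x 0 j ≤ C}

lemma SS_meas (C : ℝ) : MeasurableSet (SS k C) := by
  have h1 : SS k C = (⋂ i, ⋂ j, {x : St 2 (fun _ => k) | 0 ≤ x i j}) ∩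
      ((⋂ j, {x : St 2 (fun _ => k) | x 1 j = 0}) ∩ ⋂ j, {x : St 2 (fun _ => k) | x 0 j ≤ C}) := by
    ext x; simp only [SS, Set.mem_setOf_eq, Set.mem_inter_iff, Set.mem_iInter]
  rw [h1]
  have hm : ∀ (i : Fin 2) (j : Fin k), Measurable fun x : St 2 (fun _ => k) => x i j :=
    fun i j => (measurable_pi_apply j).comp (measurable_pi_apply i)
  refine MeasurableSet.inter ?_ (MeasurableSet.inter ?_ ?_)
  · exact MeasurableSet.iInter fun i => MeasurableSet.iInter fun j =>
      measurableSet_le measurable_const (hm i j)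
  · exact MeasurableSet.iInter fun j => (hm 1 j) (measurableSet_singleton 0)
  · exact MeasurableSet.iInter fun j => measurableSet_le (hm 0 j) measurable_const

lemma phi_mem_SS (hB : ∀ j a b, 0 < B j a b) (C : ℝ)
    (hD0 : ∀ i j l, 0 ≤ D i j l) (hDcol : ∀ i l, ∑ j, D i j l = 1)
    (hC : ∀ l, Real.exp (c l 0 - 1) / B l 0 0 ≤ C)
    (x : St 2 (fun _ => k)) (hx : ∀ i j, 0 ≤ x i j) (hx1 : ∀ j, x 1 j = 0) :
    Phi (MetaA B c D) x ∈ SS k C := by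
  refine ⟨?_, ?_, ?_⟩
  · intro i j
    rw [phi_apply]
    exact Finset.sum_nonneg fun l _ => mul_nonneg (hx i l)
      (mul_nonneg (Real.exp_nonneg _) (hD0 i l j))
  · intro j
    rw [phi_apply]
    apply Finset.sum_eq_zero
    intro l _
    rw [hx1 l]
    ring
  · intro j
    rw [phi_apply]
    calc ∑ l, x 0 l * (Real.exp (-(B l 0 0 * x 0 l + B l 0 1 * x 1 l) + c l 0) * D 0 l j)
        ≤ ∑ l, C * D 0 l j := by
          apply Finset.sum_le_sum
          intro l _
          rw [hx1 l, mul_zero, add_zero, ← mul_assoc]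
          apply mul_le_mul_of_nonneg_right ?_ (hD0 0 l j)
          calc x 0 l * Real.exp (-(B l 0 0 * x 0 l) + c l 0)
              = x 0 l * Real.exp (c l 0 - B l 0 0 * x 0 l) := by ring_nf
            _ ≤ Real.exp (c l 0 - 1) / B l 0 0 :=
                mul_exp_le (B l 0 0) (x 0 l) (c l 0) (hB l 0 0) (hx 0 l)
            _ ≤ C := hC l
      _ = C := by rw [← Finset.mul_sum, hDcol 0 j, mul_one]

end model

section MainProof
open RPAux

set_option maxHeartbeats 2000000

/-- Proposition 8: for dispersal matrices with diagonal entries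
close enough to 1, the long-term growth rate of species 2 with respect to any
invariant measure supported on the set where species 1 alone is present is at
least `max_j (c^j_2 − B^j_{21} c^j_1 / B^j_{11}) − ε`. -/
theorem metacommunity_invasion_rate_lower_bound {k : ℕ}
    (B : Fin k → Matrix (Fin 2) (Fin 2) ℝ) (c : Fin k → Fin 2 → ℝ)
    (hB : ∀ j a b, 0 < B j a b) (hc : ∀ j a, 0 < c j a)
    (ε : ℝ) (hε : 0 < ε) :
    ∃ δ0 : ℝ, 0 < δ0 ∧ δ0 < 1 ∧
      ∀ D : Fin 2 → Matrix (Fin k) (Fin k) ℝ,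
        (∀ i, IsPrimitive (D i)) →
        (∀ i l, ∑ j, D i j l = 1) →
        (∀ i j, δ0 < D i j j ∧ D i j j ≤ 1) →
        ∀ μ : Measure (St 2 (fun _ => k)), IsProbabilityMeasure μ →
          μ.map (Phi (MetaA B c D)) = μ →
          μ {x ∈ cone 2 (fun _ => k) | snorm x 1 = 0} = 1 →
          ∀ j, c j 1 - B j 1 0 * c j 0 / B j 0 0 - ε ≤ rateMu (MetaA B c D) 1 μ := by
  rcases Nat.eq_zero_or_pos k with hk | hk
  · refine ⟨1/2, by norm_num, by norm_num, ?_⟩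
    intro D _ _ _ μ _ _ _ j
    exact absurd j.isLt (by omega)
  haveI : Nonempty (Fin k) := Fin.pos_iff_nonempty.mp hk
  have hk1 : (1 : ℝ) ≤ (k : ℝ) := by exact_mod_cast hk
  -- constants
  set C : ℝ := Finset.univ.sup' Finset.univ_nonempty
    (fun l => Real.exp (c l 0 - 1) / B l 0 0) with hCdef
  have hC0 : 0 < C := by
    obtain ⟨l⟩ := (inferInstance : Nonempty (Fin k))
    refine lt_of_lt_of_le (div_pos (Real.exp_pos (c l 0 - 1)) (hB l 0 0)) ?_
    rw [hCdef]
    exact Finset.le_sup' (fun l => Real.exp (c l 0 - 1) / B l 0 0) (Finset.mem_univ l)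
  have hCl : ∀ l, Real.exp (c l 0 - 1) / B l 0 0 ≤ C := by
    intro l
    rw [hCdef]
    exact Finset.le_sup' (fun l => Real.exp (c l 0 - 1) / B l 0 0) (Finset.mem_univ l)
  set ρf : Fin k → ℝ := fun j => ε * B j 0 0 / (2 * B j 1 0) with hρdef
  have hρ0 : ∀ j, 0 < ρf j := fun j => by
    apply div_pos (mul_pos hε (hB j 0 0)) (by linarith [hB j 1 0])
  set fm : Fin k → ℝ := fun j => Real.exp (c j 0 - B j 0 0 * C) with hfmdef
  have hfm0 : ∀ j, 0 < fm j := fun j => Real.exp_pos _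
  set sf : Fin k → ℝ := fun j => (c j 0 / B j 0 0) * fm j * (Real.exp (ρf j) - 1) / 2
    with hsfdef
  have hexpρ : ∀ j, 0 < Real.exp (ρf j) - 1 := fun j => by
    have : (1:ℝ) < Real.exp (ρf j) := by
      rw [← Real.exp_zero]; exact Real.exp_lt_exp.mpr (hρ0 j)
    linarith
  have hsf0 : ∀ j, 0 < sf j := fun j => by
    apply div_pos (mul_pos (mul_pos (div_pos (hc j 0) (hB j 0 0)) (hfm0 j)) (hexpρ j))
    norm_num
  set ηf : Fin k → ℝ := fun j => min (sf j * fm j * (Real.exp (ρf j) - 1)) (sf j) with hηdef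
  have hηf0 : ∀ j, 0 < ηf j := fun j =>
    lt_min (mul_pos (mul_pos (hsf0 j) (hfm0 j)) (hexpρ j)) (hsf0 j)
  set ηmin : ℝ := Finset.univ.inf' Finset.univ_nonempty ηf with hηmindef
  have hηmin0 : 0 < ηmin := by
    rw [hηmindef, Finset.lt_inf'_iff]
    exact fun j _ => hηf0 j
  have hηminle : ∀ j, ηmin ≤ ηf j := fun j => Finset.inf'_le _ (Finset.mem_univ j)
  set δ0 : ℝ := max (Real.exp (-(ε/2))) (1 - ηmin / (C + 1)) with hδdef
  have hδpos : 0 < δ0 := lt_of_lt_of_le (Real.exp_pos _) (le_max_left _ _)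
  have hδlt1 : δ0 < 1 := by
    apply max_lt (Real.exp_lt_one_iff.mpr (by linarith))
    have : 0 < ηmin / (C + 1) := div_pos hηmin0 (by linarith)
    linarith
  refine ⟨δ0, hδpos, hδlt1, ?_⟩
  intro D hprim hcol hdiag μ hPμ hmap hsupp
  haveI := hPμ
  have hD0 : ∀ i j l, 0 ≤ D i j l := fun i => (hprim i).1
  have hD1 : ∀ i a l, D i a l ≤ 1 := by
    intro i a l
    calc D i a l ≤ ∑ a', D i a' l :=
          Finset.single_le_sum (f := fun a' => D i a' l) (fun a' _ => hD0 i a' l)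
            (Finset.mem_univ a)
      _ = 1 := hcol i l
  -- residual dispersal bound
  have hδη : ∀ j, C * (1 - D 0 j j) ≤ ηf j := by
    intro j
    have h1 : 1 - D 0 j j ≤ ηmin / (C + 1) := by
      have := (hdiag 0 j).1
      have h2 : 1 - ηmin / (C + 1) ≤ δ0 := le_max_right _ _
      linarith
    calc C * (1 - D 0 j j) ≤ C * (ηmin / (C + 1)) :=
          mul_le_mul_of_nonneg_left h1 hC0.le
      _ ≤ ηmin := by
          rw [mul_div_assoc']
          rw [div_le_iff₀ (by linarith)]
          nlinarith
      _ ≤ ηf j := hηminle j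
  -- continuity / measurability infrastructure
  have hΦcont : Continuous (Phi (MetaA B c D)) := cont_phi B c D
  have hΦmeas : Measurable (Phi (MetaA B c D)) := hΦcont.measurable
  have hm : ∀ (i : Fin 2) (j : Fin k), Measurable fun x : St 2 (fun _ => k) => x i j :=
    fun i j => (measurable_pi_apply j).comp (measurable_pi_apply i)
  have hS_meas : MeasurableSet (SS k C) := SS_meas C
  -- the support set
  have hmemS : ∀ x, x ∈ cone 2 (fun _ => k) → (∀ j, x 1 j = 0) →
      Phi (MetaA B c D) x ∈ SS k C := by
    intro x hx hx1
    exact phi_mem_SS B c D hB C hD0 hcol hCl x hx hx1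
  have hμS : μ (SS k C) = 1 := by
    have hsub : {x ∈ cone 2 (fun _ => k) | snorm x 1 = 0}
        ⊆ (Phi (MetaA B c D)) ⁻¹' SS k C := by
      rintro x ⟨hx, hx1⟩
      have hx1' : ∀ j', x 1 j' = 0 := by
        intro j'
        have h0 := (Finset.sum_eq_zero_iff_of_nonneg
          (fun i _ => abs_nonneg (x 1 i))).mp hx1 j' (Finset.mem_univ _)
        exact abs_eq_zero.mp h0
      exact hmemS x hx hx1'
    have h1 : μ ((Phi (MetaA B c D)) ⁻¹' SS k C) = μ (SS k C) := by
      rw [← Measure.map_apply hΦmeas hS_meas, hmap]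
    refine le_antisymm prob_le_one ?_
    calc (1 : ENNReal) = μ {x ∈ cone 2 (fun _ => k) | snorm x 1 = 0} := hsupp.symm
      _ ≤ μ ((Phi (MetaA B c D)) ⁻¹' SS k C) := measure_mono hsub
      _ = μ (SS k C) := h1
  have hae : ∀ᵐ x ∂μ, x ∈ SS k C := by
    rw [MeasureTheory.ae_iff]
    have : {x | ¬ x ∈ SS k C} = (SS k C)ᶜ := rfl
    rw [this, prob_compl_eq_zero_iff hS_meas]
    exact hμS
  have hSinv : ∀ x ∈ SS k C, Phi (MetaA B c D) x ∈ SS k C :=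
    fun x hx => hmemS x (fun i j' => hx.1 i j') hx.2.1
  have horb : ∀ x ∈ SS k C, ∀ t, (Phi (MetaA B c D))^[t] x ∈ SS k C := by
    intro x hx t
    induction t with
    | zero => simpa using hx
    | succ t ih => rw [Function.iterate_succ_apply']; exact hSinv _ ih
  intro j
  -- constants for patch j
  have hd2 : Real.exp (-(ε/2)) < D 1 j j :=
    lt_of_le_of_lt (le_max_left _ _) (hdiag 1 j).1
  have hd2pos : 0 < D 1 j j := lt_trans (Real.exp_pos _) hd2
  set g : St 2 (fun _ => k) → ℝ :=
    fun y => c j 1 + Real.log (D 1 j j) - B j 1 0 * y 0 j with hgdef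
  set gLo : ℝ := c j 1 + Real.log (D 1 j j) - B j 1 0 * C with hgLodef
  set gHi : ℝ := c j 1 + Real.log (D 1 j j) with hgHidef
  have hgS : ∀ y ∈ SS k C, g y ∈ Set.Icc gLo gHi := by
    intro y hy
    have h1 : 0 ≤ y 0 j := hy.1 0 j
    have h2 : y 0 j ≤ C := hy.2.2 j
    constructor
    · simp only [hgdef, hgLodef]
      nlinarith [hB j 1 0]
    · simp only [hgdef, hgHidef]
      nlinarith [hB j 1 0]
  have hgLoHi : gLo ≤ gHi := by
    simp only [hgLodef, hgHidef]
    nlinarith [hB j 1 0, hC0]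
  have hgcont : Continuous g := by
    simp only [hgdef]
    fun_prop
  have hgmeas : Measurable g := hgcont.measurable
  -- the per-step diagonal entry equals exp (g y) on SS
  have hA_nonneg1 : ∀ (y : St 2 (fun _ => k)) (a b : Fin k), 0 ≤ MetaA B c D y 1 a b := by
    intro y a b
    rw [metaA_apply]
    exact mul_nonneg (Real.exp_nonneg _) (hD0 1 a b)
  have hAyjj : ∀ y ∈ SS k C, MetaA B c D y 1 j j = Real.exp (g y) := by
    intro y hy
    rw [metaA_apply, hy.2.1 j, mul_zero, add_zero]
    have hgy : g y = (-(B j 1 0 * y 0 j) + c j 1) + Real.log (D 1 j j) := by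
      simp only [hgdef]; ring
    conv_rhs => rw [hgy, Real.exp_add, Real.exp_log hd2pos]
  -- lower bound for the cocycle
  have hsum_le : ∀ x ∈ SS k C, ∀ t : ℕ,
      Real.exp (∑ s ∈ Finset.range t, g ((Phi (MetaA B c D))^[s] x))
        ≤ mnorm (coc (MetaA B c D) 1 x t) := by
    intro x hx t
    rw [Real.exp_sum]
    have h1 : ∏ s ∈ Finset.range t, Real.exp (g ((Phi (MetaA B c D))^[s] x))
        = ∏ s ∈ Finset.range t, MetaA B c D ((Phi (MetaA B c D))^[s] x) 1 j j := by
      apply Finset.prod_congr rfl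
      intro s _
      rw [hAyjj _ (horb x hx s)]
    rw [h1]
    calc ∏ s ∈ Finset.range t, MetaA B c D ((Phi (MetaA B c D))^[s] x) 1 j j
        ≤ coc (MetaA B c D) 1 x t j j := coc_diag _ 1 (fun y a b => hA_nonneg1 y a b) x j t
      _ ≤ |coc (MetaA B c D) 1 x t j j| := le_abs_self _
      _ ≤ mnorm (coc (MetaA B c D) 1 x t) := abs_entry_le_mnorm _ j j
  have hmnorm_pos : ∀ x ∈ SS k C, ∀ t, 0 < mnorm (coc (MetaA B c D) 1 x t) :=
    fun x hx t => lt_of_lt_of_le (Real.exp_pos _) (hsum_le x hx t)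
  -- upper bound for the cocycle
  set cmax : ℝ := Finset.univ.sup' Finset.univ_nonempty (fun l => c l 1) with hcmaxdef
  have hcmax : ∀ l, c l 1 ≤ cmax := by
    intro l; rw [hcmaxdef]; exact Finset.le_sup' (fun l => c l 1) (Finset.mem_univ l)
  have hcmax0 : 0 < cmax := by
    obtain ⟨l⟩ := (inferInstance : Nonempty (Fin k))
    exact lt_of_lt_of_le (hc l 1) (hcmax l)
  set MA : ℝ := (k : ℝ)^2 * Real.exp cmax with hMAdef
  have hMA1 : 1 ≤ MA := by
    have h1 : (1:ℝ) ≤ (k:ℝ)^2 := by nlinarith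
    have h2 : 1 ≤ Real.exp cmax := Real.one_le_exp hcmax0.le
    nlinarith
  have hmnormA : ∀ y ∈ SS k C, mnorm (MetaA B c D y 1) ≤ MA := by
    intro y hy
    have : mnorm (MetaA B c D y 1) ≤ ∑ _a : Fin k, ∑ _l : Fin k, Real.exp cmax := by
      apply Finset.sum_le_sum; intro a _
      apply Finset.sum_le_sum; intro l _
      rw [metaA_apply, abs_of_nonneg (mul_nonneg (Real.exp_nonneg _) (hD0 1 a l))]
      calc Real.exp (-(B a 1 0 * y 0 a + B a 1 1 * y 1 a) + c a 1) * D 1 a l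
          ≤ Real.exp (-(B a 1 0 * y 0 a + B a 1 1 * y 1 a) + c a 1) * 1 :=
            mul_le_mul_of_nonneg_left (hD1 1 a l) (Real.exp_nonneg _)
        _ ≤ Real.exp cmax := by
            rw [mul_one]
            apply Real.exp_le_exp.mpr
            have h1 : 0 ≤ B a 1 0 * y 0 a := mul_nonneg (hB a 1 0).le (hy.1 0 a)
            have h2 : 0 ≤ B a 1 1 * y 1 a := mul_nonneg (hB a 1 1).le (hy.1 1 a)
            have := hcmax a
            linarith
    refine le_trans this ?_
    rw [Finset.sum_const, Finset.sum_const, hMAdef]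
    simp [Finset.card_univ]
    nlinarith [Real.exp_pos cmax]
  have hmnorm_coc_ub : ∀ x ∈ SS k C, ∀ t,
      mnorm (coc (MetaA B c D) 1 x t) ≤ (k:ℝ) * MA ^ t := by
    intro x hx t
    exact mnorm_coc_le (MetaA B c D) 1 x MA (by linarith) (fun s => hmnormA _ (horb x hx s)) t
  set Mb : ℝ := Real.log k + Real.log MA with hMbdef
  set R : ℕ → St 2 (fun _ => k) → ℝ :=
    fun t x => Real.log (mnorm (coc (MetaA B c D) 1 x t)) / t with hRdef
  have hRub : ∀ x ∈ SS k C, ∀ t : ℕ, 1 ≤ t → R t x ≤ Mb := by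
    intro x hx t ht
    have ht0 : (0:ℝ) < t := by exact_mod_cast ht
    have h1 : Real.log (mnorm (coc (MetaA B c D) 1 x t)) ≤ Real.log ((k:ℝ) * MA ^ t) :=
      Real.log_le_log (hmnorm_pos x hx t) (hmnorm_coc_ub x hx t)
    have h2 : Real.log ((k:ℝ) * MA ^ t) = Real.log k + t * Real.log MA := by
      rw [Real.log_mul (Nat.cast_ne_zero.mpr (by omega)) (pow_pos (by linarith : (0:ℝ) < MA) t).ne', Real.log_pow]
      try push_cast
      try ring
    have hlogk : 0 ≤ Real.log k := Real.log_nonneg hk1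
    have hlogMA : 0 ≤ Real.log MA := Real.log_nonneg hMA1
    simp only [hRdef]
    rw [div_le_iff₀ ht0]
    calc Real.log (mnorm (coc (MetaA B c D) 1 x t)) ≤ Real.log k + t * Real.log MA := by
          rw [← h2]; exact h1
      _ ≤ Mb * t := by
          have ht1 : (1:ℝ) ≤ t := by exact_mod_cast ht
          simp only [hMbdef]
          nlinarith
  set Av : ℕ → St 2 (fun _ => k) → ℝ :=
    fun t x => (∑ s ∈ Finset.range t, g ((Phi (MetaA B c D))^[s] x)) / t with hAvdef
  have hAvIcc : ∀ x ∈ SS k C, ∀ t : ℕ, Av (t+1) x ∈ Set.Icc gLo gHi := by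
    intro x hx t
    have ht0 : (0:ℝ) < (t+1 : ℕ) := by positivity
    have hlo : gLo * ((t+1 : ℕ) : ℝ) ≤ ∑ s ∈ Finset.range (t+1), g ((Phi (MetaA B c D))^[s] x) := by
      calc gLo * ((t+1 : ℕ) : ℝ) = ∑ _s ∈ Finset.range (t+1), gLo := by
            rw [Finset.sum_const, Finset.card_range]; push_cast; ring
        _ ≤ _ := Finset.sum_le_sum fun s _ => (hgS _ (horb x hx s)).1
    have hhi : ∑ s ∈ Finset.range (t+1), g ((Phi (MetaA B c D))^[s] x) ≤ gHi * ((t+1 : ℕ) : ℝ) := by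
      calc _ ≤ ∑ _s ∈ Finset.range (t+1), gHi :=
            Finset.sum_le_sum fun s _ => (hgS _ (horb x hx s)).2
        _ = gHi * ((t+1 : ℕ) : ℝ) := by
            rw [Finset.sum_const, Finset.card_range]; push_cast; ring
    constructor
    · simp only [hAvdef]
      rw [le_div_iff₀ ht0]
      exact hlo
    · simp only [hAvdef]
      rw [div_le_iff₀ ht0]
      exact hhi
  have hAvR : ∀ x ∈ SS k C, ∀ t : ℕ, Av (t+1) x ≤ R (t+1) x := by
    intro x hx t
    have ht0 : (0:ℝ) < ((t+1 : ℕ) : ℝ) := by positivity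
    have hnum : (∑ s ∈ Finset.range (t+1), g ((Phi (MetaA B c D))^[s] x))
        ≤ Real.log (mnorm (coc (MetaA B c D) 1 x (t+1))) :=
      (Real.le_log_iff_exp_le (hmnorm_pos x hx (t+1))).mpr (hsum_le x hx (t+1))
    simp only [hAvdef, hRdef]
    gcongr
  -- measurability
  have hRmeas : ∀ t, Measurable (fun x => R t x) := by
    intro t
    simp only [hRdef]
    apply Measurable.div_const
    apply Real.measurable_log.comp
    apply Continuous.measurable
    have : (fun x : St 2 (fun _ => k) => mnorm (coc (MetaA B c D) 1 x t))
        = fun x => ∑ a, ∑ b, |coc (MetaA B c D) 1 x t a b| := rfl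
    rw [this]
    exact continuous_finset_sum _ fun a _ => continuous_finset_sum _ fun b _ =>
      (cont_coc B c D 1 t a b).abs
  have hAvmeas : ∀ t, Measurable (fun x => Av t x) := by
    intro t
    simp only [hAvdef]
    apply Measurable.div_const
    apply Finset.measurable_sum
    intro s _
    exact (hgcont.comp (hΦcont.iterate s)).measurable
  have hrate_eq : ∀ x, rate (MetaA B c D) 1 x = Filter.limsup (fun t => R t x) Filter.atTop :=
    fun x => rfl
  have hrate_meas : Measurable (rate (MetaA B c D) 1) := by
    have : rate (MetaA B c D) 1 = fun x => Filter.limsup (fun t => R t x) Filter.atTop := by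
      funext x; exact hrate_eq x
    rw [this]
    exact Measurable.limsup hRmeas
  -- pointwise limsup facts on SS
  have hps : ∀ x ∈ SS k C,
      Filter.limsup (fun t => Av (t+1) x) Filter.atTop ≤ rate (MetaA B c D) 1 x
      ∧ gLo ≤ rate (MetaA B c D) 1 x ∧ rate (MetaA B c D) 1 x ≤ Mb := by
    intro x hx
    have hRb : ∀ᶠ (t:ℕ) in Filter.atTop, R t x ≤ Mb := by
      filter_upwards [Filter.eventually_ge_atTop 1] with t ht using hRub x hx t ht
    have hRlo : ∀ᶠ (t:ℕ) in Filter.atTop, gLo ≤ R t x := by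
      filter_upwards [Filter.eventually_ge_atTop 1] with t ht
      obtain ⟨t', rfl⟩ : ∃ t', t = t' + 1 := ⟨t - 1, by omega⟩
      exact le_trans (hAvIcc x hx t').1 (hAvR x hx t')
    have hbddR : Filter.IsBoundedUnder (· ≤ ·) Filter.atTop (fun t => R t x) :=
      ⟨Mb, Filter.eventually_map.mpr hRb⟩
    have hcobR : Filter.IsCoboundedUnder (· ≤ ·) Filter.atTop (fun t => R t x) :=
      Filter.IsBoundedUnder.isCoboundedUnder_flip ⟨gLo, Filter.eventually_map.mpr hRlo⟩
    refine ⟨?_, ?_, ?_⟩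
    · have h1 : Filter.limsup (fun t => Av (t+1) x) Filter.atTop
          ≤ Filter.limsup (fun t => R (t+1) x) Filter.atTop := by
        have hcb : Filter.IsCoboundedUnder (· ≤ ·) Filter.atTop (fun t => Av (t+1) x) :=
          Filter.IsBoundedUnder.isCoboundedUnder_flip
            ⟨gLo, Filter.eventually_map.mpr
              (Filter.Eventually.of_forall fun t => (hAvIcc x hx t).1)⟩
        have hbd : Filter.IsBoundedUnder (· ≤ ·) Filter.atTop (fun t => R (t+1) x) :=
          ⟨Mb, Filter.eventually_map.mpr
            (Filter.Eventually.of_forall fun t => hRub x hx (t+1) (by omega))⟩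
        exact Filter.limsup_le_limsup (Filter.Eventually.of_forall fun t => hAvR x hx t) hcb hbd
      have h2 : Filter.limsup (fun t => R (t+1) x) Filter.atTop
          = Filter.limsup (fun t => R t x) Filter.atTop :=
        Filter.limsup_nat_add (fun t => R t x) 1
      rw [hrate_eq x]
      rw [h2] at h1
      exact h1
    · rw [hrate_eq x]
      exact Filter.le_limsup_of_frequently_le hRlo.frequently hbddR
    · rw [hrate_eq x]
      exact Filter.limsup_le_of_le hcobR hRb
  -- integrability
  have hbnd_int : ∀ (a b : ℝ) (F : St 2 (fun _ => k) → ℝ), Measurable F →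
      (∀ᵐ x ∂μ, F x ∈ Set.Icc a b) → Integrable F μ := by
    intro a b F hFm hFb
    refine Integrable.mono' (integrable_const (max |a| |b|)) hFm.aestronglyMeasurable ?_
    filter_upwards [hFb] with x hxb
    rw [Real.norm_eq_abs, abs_le]
    have h1 := hxb.1
    have h2 := hxb.2
    constructor
    · have := neg_abs_le a
      have h3 : -(max |a| |b|) ≤ -|a| := neg_le_neg (le_max_left _ _)
      linarith
    · exact h2.trans ((le_abs_self b).trans (le_max_right _ _))
  have hgHiMb : gHi ≤ Mb := by
    have h1 : Real.log (D 1 j j) ≤ 0 := Real.log_nonpos hd2pos.le (hdiag 1 j).2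
    have h2 : cmax ≤ Real.log MA := by
      have h3 : Real.exp cmax ≤ MA := by
        have : (1:ℝ) ≤ (k:ℝ)^2 := by nlinarith
        simp only [hMAdef]
        nlinarith [Real.exp_pos cmax]
      calc cmax = Real.log (Real.exp cmax) := (Real.log_exp _).symm
        _ ≤ Real.log MA := Real.log_le_log (Real.exp_pos _) h3
    have h4 : 0 ≤ Real.log k := Real.log_nonneg hk1
    have h5 := hcmax j
    simp only [hgHidef, hMbdef]
    linarith
  -- integrals of the rate chain
  have hy0int : Integrable (fun y : St 2 (fun _ => k) => y 0 j) μ := by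
    refine hbnd_int 0 C _ (hm 0 j) ?_
    filter_upwards [hae] with y hy
    exact ⟨hy.1 0 j, hy.2.2 j⟩
  have hgorb_int : ∀ s, Integrable (fun x => g ((Phi (MetaA B c D))^[s] x)) μ := by
    intro s
    refine hbnd_int gLo gHi _ ((hgcont.comp (hΦcont.iterate s)).measurable) ?_
    filter_upwards [hae] with x hxS
    exact hgS _ (horb x hxS s)
  have hIg : ∀ s, ∫ x, g ((Phi (MetaA B c D))^[s] x) ∂μ = ∫ x, g x ∂μ :=
    fun s => integral_comp_iterate hΦmeas hmap s hgmeas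
  have hAvint_eq : ∀ t : ℕ, ∫ x, Av (t+1) x ∂μ = ∫ x, g x ∂μ := by
    intro t
    simp only [hAvdef]
    rw [integral_div, integral_finset_sum _ (fun s _ => hgorb_int s),
      Finset.sum_congr rfl (fun s (_ : s ∈ Finset.range (t+1)) => hIg s),
      Finset.sum_const, Finset.card_range]
    have ht0 : ((t+1 : ℕ) : ℝ) ≠ 0 := by positivity
    field_simp
    push_cast; ring
  have hrevf : ∫ x, g x ∂μ
      ≤ ∫ x, Filter.limsup (fun t => Av (t+1) x) Filter.atTop ∂μ := by
    refine rev_fatou μ (fun t x => Av (t+1) x) (fun t => hAvmeas (t+1)) gLo gHi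
      (∫ x, g x ∂μ) ?_ hAvint_eq
    filter_upwards [hae] with x hxS
    exact fun t => hAvIcc x hxS t
  have hlimsupAv_meas : Measurable
      (fun x => Filter.limsup (fun t => Av (t+1) x) Filter.atTop) :=
    Measurable.limsup (fun t => hAvmeas (t+1))
  have hlimsupAv_int : Integrable
      (fun x => Filter.limsup (fun t => Av (t+1) x) Filter.atTop) μ := by
    refine hbnd_int gLo Mb _ hlimsupAv_meas ?_
    filter_upwards [hae] with x hxS
    have hb : Filter.IsBoundedUnder (· ≤ ·) Filter.atTop (fun t => Av (t+1) x) :=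
      ⟨gHi, Filter.eventually_map.mpr (Filter.Eventually.of_forall fun t => (hAvIcc x hxS t).2)⟩
    have hcb : Filter.IsCoboundedUnder (· ≤ ·) Filter.atTop (fun t => Av (t+1) x) :=
      Filter.IsBoundedUnder.isCoboundedUnder_flip
        ⟨gLo, Filter.eventually_map.mpr (Filter.Eventually.of_forall fun t => (hAvIcc x hxS t).1)⟩
    constructor
    · exact Filter.le_limsup_of_frequently_le
        (Filter.Frequently.of_forall fun t => (hAvIcc x hxS t).1) hb
    · exact le_trans (Filter.limsup_le_of_le hcb
        (Filter.Eventually.of_forall fun t => (hAvIcc x hxS t).2)) hgHiMb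
  have hrate_int : Integrable (rate (MetaA B c D) 1) μ := by
    refine hbnd_int gLo Mb _ hrate_meas ?_
    filter_upwards [hae] with x hxS
    exact ⟨(hps x hxS).2.1, (hps x hxS).2.2⟩
  have hchain1 : ∫ x, g x ∂μ ≤ rateMu (MetaA B c D) 1 μ := by
    refine le_trans hrevf (le_trans (integral_mono_ae hlimsupAv_int hrate_int ?_) ?_)
    · filter_upwards [hae] with x hxS
      exact (hps x hxS).1
    · exact le_of_eq rfl
  have hintg : ∫ x, g x ∂μ
      = (c j 1 + Real.log (D 1 j j)) - B j 1 0 * ∫ x, x 0 j ∂μ := by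
    simp only [hgdef]
    rw [show (fun y : St 2 (fun _ => k) => c j 1 + Real.log (D 1 j j) - B j 1 0 * y 0 j)
        = fun y => (c j 1 + Real.log (D 1 j j)) - B j 1 0 * y 0 j from rfl]
    rw [integral_sub (integrable_const _) (hy0int.const_mul _), integral_const,
      integral_const_mul]
    simp
  -- one-step bound for species 1 in patch j
  have hstep : ∀ y ∈ SS k C, Phi (MetaA B c D) y 0 j
      ≤ y 0 j * Real.exp (c j 0 - B j 0 0 * y 0 j) + ηf j := by
    intro y hy
    rw [phi_apply]
    rw [Finset.sum_eq_sum_sdiff_singleton_add (Finset.mem_univ j)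
      (fun l => y 0 l * (Real.exp (-(B l 0 0 * y 0 l + B l 0 1 * y 1 l) + c l 0) * D 0 l j))]
    have hterm : y 0 j * (Real.exp (-(B j 0 0 * y 0 j + B j 0 1 * y 1 j) + c j 0) * D 0 j j)
        ≤ y 0 j * Real.exp (c j 0 - B j 0 0 * y 0 j) := by
      rw [hy.2.1 j, mul_zero, add_zero,
        show -(B j 0 0 * y 0 j) + c j 0 = c j 0 - B j 0 0 * y 0 j by ring]
      exact mul_le_mul_of_nonneg_left
        (mul_le_of_le_one_right (Real.exp_nonneg _) (hdiag 0 j).2) (hy.1 0 j)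
    have hrest : ∑ l ∈ Finset.univ \ {j},
        y 0 l * (Real.exp (-(B l 0 0 * y 0 l + B l 0 1 * y 1 l) + c l 0) * D 0 l j) ≤ ηf j := by
      have hsplit : ∑ l ∈ Finset.univ \ {j}, D 0 l j = 1 - D 0 j j := by
        have h := Finset.sum_eq_sum_sdiff_singleton_add (Finset.mem_univ j)
          (fun l => D 0 l j)
        rw [hcol 0 j] at h
        linarith
      calc ∑ l ∈ Finset.univ \ {j},
          y 0 l * (Real.exp (-(B l 0 0 * y 0 l + B l 0 1 * y 1 l) + c l 0) * D 0 l j)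
          ≤ ∑ l ∈ Finset.univ \ {j}, C * D 0 l j := by
            apply Finset.sum_le_sum
            intro l _
            rw [hy.2.1 l, mul_zero, add_zero, ← mul_assoc]
            apply mul_le_mul_of_nonneg_right ?_ (hD0 0 l j)
            calc y 0 l * Real.exp (-(B l 0 0 * y 0 l) + c l 0)
                = y 0 l * Real.exp (c l 0 - B l 0 0 * y 0 l) := by ring_nf
              _ ≤ Real.exp (c l 0 - 1) / B l 0 0 :=
                  mul_exp_le (B l 0 0) (y 0 l) (c l 0) (hB l 0 0) (hy.1 0 l)
              _ ≤ C := hCl l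
        _ = C * (1 - D 0 j j) := by rw [← Finset.mul_sum, hsplit]
        _ ≤ ηf j := hδη j
    linarith
  -- pointwise logarithmic estimate
  have hkey : ∀ y ∈ SS k C,
      Real.log (Phi (MetaA B c D) y 0 j + sf j) - Real.log (y 0 j + sf j)
        ≤ c j 0 + ρf j - B j 0 0 * y 0 j := by
    intro y hy
    have hv0 : 0 ≤ y 0 j := hy.1 0 j
    have hvC : y 0 j ≤ C := hy.2.2 j
    have hcb : c j 0 ≤ B j 0 0 * C := by
      have h1 : c j 0 ≤ Real.exp (c j 0 - 1) := by
        have := Real.add_one_le_exp (c j 0 - 1); linarith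
      have h2 := hCl j
      rw [div_le_iff₀ (hB j 0 0)] at h2
      nlinarith
    have hη1' : ηf j ≤ sf j * Real.exp (c j 0 - B j 0 0 * C) * (Real.exp (ρf j) - 1) :=
      min_le_left _ _
    have hsη' : sf j + ηf j
        ≤ (c j 0 / B j 0 0) * Real.exp (c j 0 - B j 0 0 * C) * (Real.exp (ρf j) - 1) := by
      have h1 : ηf j ≤ sf j := min_le_right _ _
      have h2 : 2 * sf j
          = (c j 0 / B j 0 0) * Real.exp (c j 0 - B j 0 0 * C) * (Real.exp (ρf j) - 1) := by
        simp only [hsfdef, hfmdef]; ring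
      linarith
    have hki := key_ineq (c j 0) (B j 0 0) C (ρf j) (sf j) (ηf j) (y 0 j)
      (hB j 0 0) (hc j 0) (hρ0 j) hv0 hvC hcb (hsf0 j) (hηf0 j).le hη1' hsη'
    have hPy0 : 0 ≤ Phi (MetaA B c D) y 0 j := (hSinv y hy).1 0 j
    have htot : Phi (MetaA B c D) y 0 j + sf j
        ≤ (y 0 j + sf j) * Real.exp (c j 0 - B j 0 0 * y 0 j) * Real.exp (ρf j) := by
      have := hstep y hy
      linarith
    have hlog := Real.log_le_log (by linarith [hsf0 j] : (0:ℝ) < Phi (MetaA B c D) y 0 j + sf j) htot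
    have hvs : (0:ℝ) < y 0 j + sf j := by linarith [hsf0 j]
    rw [Real.log_mul (mul_ne_zero hvs.ne' (Real.exp_ne_zero _)) (Real.exp_ne_zero _),
      Real.log_mul hvs.ne' (Real.exp_ne_zero _), Real.log_exp, Real.log_exp] at hlog
    linarith
  -- integrate the logarithmic estimate
  have hlog_meas : Measurable (fun y : St 2 (fun _ => k) => Real.log (y 0 j + sf j)) :=
    Real.measurable_log.comp ((hm 0 j).add_const _)
  have hlog1_int : Integrable (fun y : St 2 (fun _ => k) => Real.log (y 0 j + sf j)) μ := by
    refine hbnd_int (Real.log (sf j)) (Real.log (C + sf j)) _ hlog_meas ?_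
    filter_upwards [hae] with y hy
    constructor
    · exact Real.log_le_log (hsf0 j) (by linarith [hy.1 0 j])
    · exact Real.log_le_log (by linarith [hy.1 0 j, hsf0 j]) (by linarith [hy.2.2 j])
  have hlog2_int : Integrable
      (fun y => Real.log (Phi (MetaA B c D) y 0 j + sf j)) μ := by
    refine hbnd_int (Real.log (sf j)) (Real.log (C + sf j)) _ (hlog_meas.comp hΦmeas) ?_
    filter_upwards [hae] with y hy
    have h2 := hSinv y hy
    constructor
    · exact Real.log_le_log (hsf0 j) (by linarith [h2.1 0 j])
    · exact Real.log_le_log (by linarith [h2.1 0 j, hsf0 j]) (by linarith [h2.2.2 j])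
  have hloginv : ∫ y, Real.log (Phi (MetaA B c D) y 0 j + sf j) ∂μ
      = ∫ y, Real.log (y 0 j + sf j) ∂μ := by
    conv_rhs => rw [← hmap]
    rw [integral_map hΦmeas.aemeasurable hlog_meas.aestronglyMeasurable]
  have hIy : B j 0 0 * ∫ y, y 0 j ∂μ ≤ c j 0 + ρf j := by
    have h0 : ∫ y, (Real.log (Phi (MetaA B c D) y 0 j + sf j)
        - Real.log (y 0 j + sf j)) ∂μ = 0 := by
      rw [integral_sub hlog2_int hlog1_int, hloginv, sub_self]
    have h1 : ∫ y, (Real.log (Phi (MetaA B c D) y 0 j + sf j)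
        - Real.log (y 0 j + sf j)) ∂μ
        ≤ ∫ y, (c j 0 + ρf j - B j 0 0 * y 0 j) ∂μ := by
      apply integral_mono_ae (hlog2_int.sub hlog1_int)
        ((integrable_const _).sub (hy0int.const_mul _))
      filter_upwards [hae] with y hy using hkey y hy
    rw [h0, integral_sub (integrable_const _) (hy0int.const_mul _), integral_const,
      integral_const_mul] at h1
    simp only [measure_univ, probReal_univ, ENNReal.toReal_one, smul_eq_mul, one_mul] at h1
    linarith
  -- final combination
  have hlogd : -(ε/2) ≤ Real.log (D 1 j j) := by
    calc -(ε/2) = Real.log (Real.exp (-(ε/2))) := (Real.log_exp _).symm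
      _ ≤ Real.log (D 1 j j) := Real.log_le_log (Real.exp_pos _) hd2.le
  have hρval : B j 1 0 * ρf j / B j 0 0 = ε / 2 := by
    simp only [hρdef]
    field_simp [(hB j 1 0).ne', (hB j 0 0).ne']
  have hIyb : B j 1 0 * ∫ y, y 0 j ∂μ ≤ B j 1 0 * c j 0 / B j 0 0 + ε/2 := by
    have hIy2 : ∫ y, y 0 j ∂μ ≤ (c j 0 + ρf j) / B j 0 0 := by
      rw [le_div_iff₀ (hB j 0 0)]
      linarith
    calc B j 1 0 * ∫ y, y 0 j ∂μ ≤ B j 1 0 * ((c j 0 + ρf j) / B j 0 0) :=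
          mul_le_mul_of_nonneg_left hIy2 (hB j 1 0).le
      _ = B j 1 0 * c j 0 / B j 0 0 + B j 1 0 * ρf j / B j 0 0 := by
          field_simp
      _ = B j 1 0 * c j 0 / B j 0 0 + ε/2 := by rw [hρval]
  calc c j 1 - B j 1 0 * c j 0 / B j 0 0 - ε
      ≤ (c j 1 + Real.log (D 1 j j)) - B j 1 0 * ∫ y, y 0 j ∂μ := by linarith
    _ = ∫ x, g x ∂μ := hintg.symm
    _ ≤ rateMu (MetaA B c D) 1 μ := hchain1

end MainProof

end RP
end
end
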